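/- Let (A, R) be a crystallographic arrangement in ℝ^r and E an intersection of hyperplanes of A. Then the restriction A^E := { E ∩ H : H ∈ A, E ⊄ H } is (together with an appropriate set of covectors on E) a crystallographic arrangement in E. -/

import Mathlib

open scoped Classical Pointwise BigOperators

noncomputable section

abbrev Vr (r : ℕ) : Type := Fin r → ℝ

/-- The convex cone generated by a finite set of vectors. -/
def coneGen {M : Type*} [AddCommGroup M] [Module ℝ M] (s : Finset M) : Set M :=
  { x | ∃ c : M → ℝ, (∀ v, 0 ≤ c v) ∧ x = ∑ v ∈ s, c v • v }

/-- Dimension of the linear span of a set. -/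
def spanDim {M : Type*} [AddCommGroup M] [Module ℝ M] (s : Set M) : ℕ :=
  Module.finrank ℝ (Submodule.span ℝ s)

/-- A (linear) hyperplane: the kernel of a nonzero linear functional. -/
def IsHyp {M : Type*} [AddCommGroup M] [Module ℝ M] (H : Set M) : Prop :=
  ∃ f : M →ₗ[ℝ] ℝ, f ≠ 0 ∧ H = {x | f x = 0}

/-- A strongly convex rational polyhedral cone with respect to the lattice `N`. -/
def IsNCone {r : ℕ} (N : AddSubgroup (Vr r)) (σ : Set (Vr r)) : Prop :=
  ∃ s : Finset (Vr r), ↑s ⊆ (N : Set (Vr r)) ∧ σ = coneGen s ∧ σ ∩ (-σ) ⊆ {0}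

/-- `τ` is a face of `σ`. -/
def IsFaceOf {M : Type*} [AddCommGroup M] [Module ℝ M] (τ σ : Set M) : Prop :=
  ∃ m : M →ₗ[ℝ] ℝ, (∀ x ∈ σ, 0 ≤ m x) ∧ τ = σ ∩ {x | m x = 0}

/-- A fan in the lattice `N`. -/
structure IsFan {r : ℕ} (N : AddSubgroup (Vr r)) (F : Set (Set (Vr r))) : Prop where
  finite : F.Finite
  nonempty : F.Nonempty
  cones : ∀ σ ∈ F, IsNCone N σ
  faces : ∀ σ ∈ F, ∀ τ : Set (Vr r), IsFaceOf τ σ → τ ∈ F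
  inter : ∀ σ₁ ∈ F, ∀ σ₂ ∈ F, IsFaceOf (σ₁ ∩ σ₂) σ₁ ∧ IsFaceOf (σ₁ ∩ σ₂) σ₂

/-- Completeness: the support is everything. -/
def FanComplete {M : Type*} (F : Set (Set M)) : Prop := ⋃₀ F = Set.univ

/-- Strong symmetry: complete, and the support of the codimension-one cones is a
finite union of hyperplanes. -/
def SSymm {M : Type*} [AddCommGroup M] [Module ℝ M] (F : Set (Set M)) : Prop :=
  FanComplete F ∧ ∃ Hs : Finset (Set M), (∀ h ∈ Hs, IsHyp h) ∧
    ⋃₀ {τ ∈ F | spanDim τ = Module.finrank ℝ M - 1} = ⋃₀ ↑Hs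

/-- Central symmetry. -/
def CSymm {M : Type*} [AddCommGroup M] (F : Set (Set M)) : Prop := ∀ σ ∈ F, -σ ∈ F

/-- `b` is a ℤ-basis of the subgroup `L` of `ℝ^r`. -/
def IsZBasis {r d : ℕ} (L : AddSubgroup (Vr r)) (b : Fin d → Vr r) : Prop :=
  LinearIndependent ℝ b ∧ AddSubgroup.closure (Set.range b) = L

/-- A (full-rank) lattice in `ℝ^r`. -/
def IsLattice {r : ℕ} (N : AddSubgroup (Vr r)) : Prop :=
  ∃ b : Fin r → Vr r, IsZBasis N b

/-- A cone generated by a part of a ℤ-basis of `L`. -/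
def SmoothCone {r : ℕ} (L : AddSubgroup (Vr r)) (σ : Set (Vr r)) : Prop :=
  ∃ (d : ℕ) (b : Fin d → Vr r) (s : Finset (Fin d)),
    IsZBasis L b ∧ σ = coneGen (s.image b)

/-- Chambers of an arrangement: connected components of the complement. -/
def chambers {r : ℕ} (A : Finset (Set (Vr r))) : Set (Set (Vr r)) :=
  { K | ∃ x ∈ (⋃₀ (A : Set (Set (Vr r))))ᶜ,
      K = connectedComponentIn (⋃₀ (A : Set (Set (Vr r))))ᶜ x }

/-- An open simplicial cone of full dimension. -/
def IsOpenSimplicialCone {r : ℕ} (K : Set (Vr r)) : Prop :=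
  ∃ b : Fin r → Vr r, LinearIndependent ℝ b ∧
    K = { x | ∃ c : Fin r → ℝ, (∀ i, 0 < c i) ∧ x = ∑ i, c i • b i }

def ker0 {r : ℕ} (α : Vr r →ₗ[ℝ] ℝ) : Set (Vr r) := {x | α x = 0}

/-- Walls of a chamber `K`. -/
def walls {r : ℕ} (A : Finset (Set (Vr r))) (K : Set (Vr r)) : Set (Set (Vr r)) :=
  { H | H ∈ A ∧ spanDim (H ∩ closure K) = r - 1 }

/-- The set `B^K` of inward-pointing normals of the walls of `K`. -/
def BK {r : ℕ} (A : Finset (Set (Vr r))) (R : Finset (Vr r →ₗ[ℝ] ℝ)) (K : Set (Vr r)) :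
    Finset (Vr r →ₗ[ℝ] ℝ) :=
  R.filter (fun α => ker0 α ∈ walls A K ∧ K ⊆ {x | 0 ≤ α x})

/-- A crystallographic arrangement `(A, R)`. -/
structure IsCrystArr {r : ℕ} (A : Finset (Set (Vr r))) (R : Finset (Vr r →ₗ[ℝ] ℝ)) : Prop where
  simplicial : ∀ K ∈ chambers A, IsOpenSimplicialCone K
  hyps : (A : Set (Set (Vr r))) = (fun α => ker0 α) '' (R : Set (Vr r →ₗ[ℝ] ℝ))
  nonzero : ∀ α ∈ R, α ≠ 0
  neg_mem : ∀ α ∈ R, -α ∈ R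
  reduced : ∀ α ∈ R, ∀ β ∈ R, (∃ c : ℝ, β = c • α) → β = α ∨ β = -α
  integral : ∀ K ∈ chambers A, ∀ β ∈ R,
    β ∈ Submodule.span ℤ ((BK A R K : Set (Vr r →ₗ[ℝ] ℝ)))

/-- The set of all intersections of closed chambers of `A`. -/
def closedChamberInts {r : ℕ} (A : Finset (Set (Vr r))) : Set (Set (Vr r)) :=
  { σ | ∃ S : Set (Set (Vr r)), S.Nonempty ∧ S ⊆ chambers A ∧ σ = ⋂₀ (closure '' S) }

/-- The lattice dual to `M_R = ∑_{α ∈ R} ℤ α`. -/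
def dualLattice {r : ℕ} (R : Finset (Vr r →ₗ[ℝ] ℝ)) : AddSubgroup (Vr r) where
  carrier := { x | ∀ α ∈ R, ∃ k : ℤ, α x = k }
  zero_mem' := fun α _ => ⟨0, by simp⟩
  add_mem' := by
    intro x y hx hy α hα
    obtain ⟨k, hk⟩ := hx α hα
    obtain ⟨m, hm⟩ := hy α hα
    exact ⟨k + m, by simp [hk, hm]⟩
  neg_mem' := by
    intro x hx α hα
    obtain ⟨k, hk⟩ := hx α hα
    exact ⟨-k, by simp [hk]⟩

/-- The star fan of `δ`, as a collection of cones in the quotient by `E`. -/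
def starAt {r : ℕ} (F : Set (Set (Vr r))) (δ : Set (Vr r)) (E : Submodule ℝ (Vr r)) :
    Set (Set (Vr r ⧸ E)) :=
  { τ | ∃ σ ∈ F, δ ⊆ σ ∧ τ = E.mkQ '' σ }

/-- The positive roots `R_+^K` at the chamber `K`. -/
def RplusF {r : ℕ} (A : Finset (Set (Vr r))) (R : Finset (Vr r →ₗ[ℝ] ℝ)) (K : Set (Vr r)) :
    Finset (Vr r →ₗ[ℝ] ℝ) :=
  R.filter (fun α => α ∈ coneGen (BK A R K))

/-- `ρ^K`, the half-sum of the positive roots at `K`. -/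
def rhoK {r : ℕ} (A : Finset (Set (Vr r))) (R : Finset (Vr r →ₗ[ℝ] ℝ)) (K : Set (Vr r)) :
    Vr r →ₗ[ℝ] ℝ :=
  (1/2 : ℝ) • ∑ α ∈ RplusF A R K, α

end

noncomputable section

namespace StmtAux

variable {n m : ℕ}

/-- open simplicial cone on a family -/
def posSpan (v : Fin m → Vr n) : Set (Vr n) :=
  { x | ∃ c : Fin m → ℝ, (∀ i, 0 < c i) ∧ x = ∑ i, c i • v i }

def nonnegSpan (v : Fin m → Vr n) : Set (Vr n) :=
  { x | ∃ c : Fin m → ℝ, (∀ i, 0 ≤ c i) ∧ x = ∑ i, c i • v i }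

lemma ker0_smul {f : Vr n →ₗ[ℝ] ℝ} {c : ℝ} (hc : c ≠ 0) : ker0 (c • f) = ker0 f := by
  ext x; simp [ker0, hc]

lemma ker0_neg (f : Vr n →ₗ[ℝ] ℝ) : ker0 (-f) = ker0 f := by
  ext x; simp [ker0, neg_eq_zero]

lemma exists_apply_ne_zero {f : Vr n →ₗ[ℝ] ℝ} (hf : f ≠ 0) : ∃ v, f v ≠ 0 := by
  by_contra h
  push_neg at h
  exact hf (LinearMap.ext fun x => h x)

lemma zero_of_subsingleton (f : Vr 0 →ₗ[ℝ] ℝ) : f = 0 := by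
  apply LinearMap.ext; intro x
  have hx : x = 0 := Subsingleton.elim _ _
  rw [hx, map_zero]; rfl

/-- two nonzero functionals with the same kernel are proportional -/
lemma eq_smul_of_ker0_eq {f g : Vr n →ₗ[ℝ] ℝ} (hf : f ≠ 0) (hg : g ≠ 0)
    (h : ker0 f = ker0 g) : ∃ c : ℝ, c ≠ 0 ∧ g = c • f := by
  obtain ⟨v, hv⟩ := exists_apply_ne_zero hf
  refine ⟨g v / f v, ?_, ?_⟩
  · intro hc
    apply hg
    apply LinearMap.ext; intro x
    have hker : x - (f x / f v) • v ∈ ker0 f := by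
      simp [ker0, div_mul_cancel₀, hv]
    rw [h] at hker
    have : g x - (f x / f v) * g v = 0 := by simpa [ker0, sub_eq_zero] using hker
    have hgv : g v = 0 := by
      have := div_eq_zero_iff.mp hc
      rcases this with h1 | h2
      · exact h1
      · exact absurd h2 hv
    rw [hgv] at this; simpa using this
  · apply LinearMap.ext; intro x
    have hker : x - (f x / f v) • v ∈ ker0 f := by
      simp [ker0, div_mul_cancel₀, hv]
    rw [h] at hker
    have : g x - (f x / f v) * g v = 0 := by simpa [ker0, sub_eq_zero] using hker
    have : g x = (f x / f v) * g v := by linarith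
    rw [this]
    simp [LinearMap.smul_apply]
    field_simp

/-- avoid finitely many hyperplanes -/
lemma exists_forall_ne_zero (T : Finset (Vr n →ₗ[ℝ] ℝ)) (hT : ∀ f ∈ T, f ≠ 0) :
    ∃ w : Vr n, ∀ f ∈ T, f w ≠ 0 := by
  classical
  induction T using Finset.induction_on with
  | empty => exact ⟨0, by simp⟩
  | @insert α s hα ih =>
    obtain ⟨w, hw⟩ := ih (fun f hf => hT f (Finset.mem_insert_of_mem hf))
    obtain ⟨v, hv⟩ := exists_apply_ne_zero (hT α (Finset.mem_insert_self _ _))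
    -- bad t values
    have hbad : {t : ℝ | ∃ f ∈ insert α s, f w + t * f v = 0}.Finite := by
      have : {t : ℝ | ∃ f ∈ insert α s, f w + t * f v = 0} ⊆
          ⋃ f ∈ (insert α s : Finset _), {t : ℝ | f w + t * f v = 0} := by
        intro t ht; obtain ⟨f, hf, hft⟩ := ht
        exact Set.mem_biUnion hf hft
      refine Set.Finite.subset (Set.Finite.biUnion (Finset.finite_toSet _) ?_) this
      intro f hf
      rcases eq_or_ne (f v) 0 with h0 | h0
      · rcases eq_or_ne f α with rfl | hne
        · -- f = α : f v ≠ 0 contradiction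
          exact absurd h0 hv
        · have hfs : f ∈ s := by
            rcases Finset.mem_insert.mp hf with h | h
            · exact absurd h hne
            · exact h
          have : {t : ℝ | f w + t * f v = 0} = ∅ := by
            ext t; simp [h0, hw f hfs]
          rw [this]; exact Set.finite_empty
      · have : {t : ℝ | f w + t * f v = 0} ⊆ {-(f w) / f v} := by
          intro t ht
          simp only [Set.mem_setOf_eq] at ht
          simp only [Set.mem_singleton_iff]
          field_simp
          linarith
        exact Set.Finite.subset (Set.finite_singleton _) this
    obtain ⟨t, ht⟩ := hbad.infinite_compl.nonempty
    refine ⟨w + t • v, ?_⟩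
    intro f hf h0
    exact ht ⟨f, hf, by simpa using h0⟩

end StmtAux

namespace StmtAux

variable {n : ℕ}

/-- the open cell (sign chamber) of `x` w.r.t. functionals `T` -/
def cell (T : Finset (Vr n →ₗ[ℝ] ℝ)) (x : Vr n) : Set (Vr n) :=
  {y | ∀ f ∈ T, 0 < f x * f y}

lemma mem_cell_self {T : Finset (Vr n →ₗ[ℝ] ℝ)} {x : Vr n} (h : ∀ f ∈ T, f x ≠ 0) :
    x ∈ cell T x := fun f hf => mul_self_pos.mpr (h f hf)

lemma cell_open (T : Finset (Vr n →ₗ[ℝ] ℝ)) (x : Vr n) : IsOpen (cell T x) := by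
  have : cell T x = ⋂ f ∈ T, {y | 0 < f x * f y} := by
    ext y; simp [cell]
  rw [this]
  refine Set.Finite.isOpen_biInter (Finset.finite_toSet T) ?_
  intro f _
  have hc : Continuous fun y => f x * f y :=
    continuous_const.mul f.continuous_of_finiteDimensional
  exact isOpen_lt continuous_const hc

lemma cell_convex (T : Finset (Vr n →ₗ[ℝ] ℝ)) (x : Vr n) : Convex ℝ (cell T x) := by
  intro y hy z hz a b ha hb hab
  intro f hf
  have hy' := hy f hf
  have hz' := hz f hf
  have : f x * f (a • y + b • z) = a * (f x * f y) + b * (f x * f z) := by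
    simp [map_add, map_smul]; ring
  rw [this]
  rcases eq_or_lt_of_le ha with h | h
  · have hb1 : b = 1 := by linarith
    simp [← h, hb1]; linarith
  · have : 0 ≤ b * (f x * f z) := mul_nonneg hb hz'.le
    have : 0 < a * (f x * f y) := mul_pos h hy'
    linarith

lemma sign_trans {a b c : ℝ} (hab : 0 < a * b) (hac : 0 < a * c) : 0 < b * c := by
  nlinarith [sq_nonneg a, sq_nonneg (b+c), sq_nonneg (b-c)]

lemma cell_eq_of_mem {T : Finset (Vr n →ₗ[ℝ] ℝ)} {x y : Vr n}
    (hy : y ∈ cell T x) : cell T y = cell T x := by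
  ext z
  constructor
  · intro hz f hf
    exact sign_trans (mul_comm (f x) (f y) ▸ hy f hf) (hz f hf)
  · intro hz f hf
    exact sign_trans (hy f hf) (hz f hf)

lemma compl_sUnion_eq {A : Finset (Set (Vr n))} {T : Finset (Vr n →ₗ[ℝ] ℝ)}
    (hAT : (A : Set (Set (Vr n))) = (fun f => ker0 f) '' (T : Set _)) :
    (⋃₀ (A : Set (Set (Vr n))))ᶜ = {y | ∀ f ∈ T, f y ≠ 0} := by
  ext y
  constructor
  · intro h f hf h0
    exact h (Set.mem_sUnion.mpr ⟨ker0 f, by rw [hAT]; exact ⟨f, hf, rfl⟩, h0⟩)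
  · intro h hy
    obtain ⟨H, hH, hyH⟩ := Set.mem_sUnion.mp hy
    rw [hAT] at hH
    obtain ⟨f, hf, rfl⟩ := hH
    exact h f hf hyH

lemma connectedComponentIn_eq_cell {A : Finset (Set (Vr n))} {T : Finset (Vr n →ₗ[ℝ] ℝ)}
    (hAT : (A : Set (Set (Vr n))) = (fun f => ker0 f) '' (T : Set _))
    {x : Vr n} (hx : x ∈ (⋃₀ (A : Set (Set (Vr n))))ᶜ) :
    connectedComponentIn (⋃₀ (A : Set (Set (Vr n))))ᶜ x = cell T x := by
  have hU := compl_sUnion_eq hAT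
  have hxT : ∀ f ∈ T, f x ≠ 0 := by rw [hU] at hx; exact hx
  apply Set.Subset.antisymm
  · -- component ⊆ cell : sign constancy
    intro y hy
    intro f hf
    have hconn : IsPreconnected (connectedComponentIn (⋃₀ (A : Set (Set (Vr n))))ᶜ x) :=
      isPreconnected_connectedComponentIn
    have hsub : connectedComponentIn (⋃₀ (A : Set (Set (Vr n))))ᶜ x ⊆
        {z | 0 < f x * f z} ∪ {z | f x * f z < 0} := by
      intro z hz
      have hzU : z ∈ (⋃₀ (A : Set (Set (Vr n))))ᶜ := connectedComponentIn_subset _ _ hz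
      rw [hU] at hzU
      have : f x * f z ≠ 0 := mul_ne_zero (hxT f hf) (hzU f hf)
      rcases this.lt_or_gt with h | h
      · exact Or.inr h
      · exact Or.inl h
    have hcont : Continuous fun z => f x * f z :=
      continuous_const.mul f.continuous_of_finiteDimensional
    have := hconn.subset_left_of_subset_union (isOpen_lt continuous_const hcont)
      (isOpen_lt hcont continuous_const) ?_ hsub ?_
    · exact this hy
    · rw [Set.disjoint_left]; intro z hz hz'; simp at hz hz'; linarith
    · refine ⟨x, mem_connectedComponentIn hx, ?_⟩
      have := hxT f hf; simp; positivity
  · exact IsPreconnected.subset_connectedComponentIn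
      ((cell_convex T x).isPreconnected) (mem_cell_self hxT)
      (by rw [hU]; intro y hy f hf h0; have := hy f hf; rw [h0] at this; simp at this)

end StmtAux

namespace StmtAux

variable {n m : ℕ}

lemma repr_sum_eq (B : Module.Basis (Fin n) ℝ (Vr n)) (c : Fin n → ℝ) (j : Fin n) :
    B.repr (∑ i, c i • B i) j = c j := by
  rw [map_sum]
  simp only [map_smul, Module.Basis.repr_self]
  rw [Finsupp.finset_sum_apply]
  simp [Finsupp.single_apply]

lemma mem_nonnegSpan_iff (B : Module.Basis (Fin n) ℝ (Vr n)) (x : Vr n) :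
    x ∈ nonnegSpan ⇑B ↔ ∀ i, 0 ≤ B.repr x i := by
  constructor
  · rintro ⟨c, hc, rfl⟩ i
    rw [repr_sum_eq]; exact hc i
  · intro h
    refine ⟨fun i => B.repr x i, h, ?_⟩
    conv_lhs => rw [← B.sum_repr x]

lemma mem_posSpan_iff (B : Module.Basis (Fin n) ℝ (Vr n)) (x : Vr n) :
    x ∈ posSpan ⇑B ↔ ∀ i, 0 < B.repr x i := by
  constructor
  · rintro ⟨c, hc, rfl⟩ i
    rw [repr_sum_eq]; exact hc i
  · intro h
    refine ⟨fun i => B.repr x i, h, ?_⟩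
    conv_lhs => rw [← B.sum_repr x]

lemma posSpan_subset_nonnegSpan (v : Fin m → Vr n) : posSpan v ⊆ nonnegSpan v := by
  rintro x ⟨c, hc, rfl⟩
  exact ⟨c, fun i => (hc i).le, rfl⟩

lemma nonnegSpan_isClosed (B : Module.Basis (Fin n) ℝ (Vr n)) : IsClosed (nonnegSpan ⇑B) := by
  have : nonnegSpan ⇑B = ⋂ i, {x | 0 ≤ B.repr x i} := by
    ext x; simp [mem_nonnegSpan_iff B x, Set.mem_iInter]
  rw [this]
  refine isClosed_iInter fun i => ?_
  have hc : Continuous fun x => B.repr x i := by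
    have : (fun x => B.repr x i) = fun x => B.coord i x := by
      ext x; simp [Module.Basis.coord_apply]
    rw [this]
    exact (B.coord i).continuous_of_finiteDimensional
  exact isClosed_le continuous_const hc

lemma closure_posSpan (B : Module.Basis (Fin n) ℝ (Vr n)) :
    closure (posSpan ⇑B) = nonnegSpan ⇑B := by
  apply Set.Subset.antisymm
  · exact closure_minimal (posSpan_subset_nonnegSpan _) (nonnegSpan_isClosed B)
  · intro x hx
    have htend : Filter.Tendsto (fun t : ℝ => x + t • ∑ i, B i) (nhdsWithin 0 (Set.Ioi 0)) (nhds x) := by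
      have : Filter.Tendsto (fun t : ℝ => x + t • ∑ i, B i) (nhds 0) (nhds x) := by
        have h1 : Filter.Tendsto (fun t : ℝ => t • ∑ i, (B : Fin n → Vr n) i) (nhds 0) (nhds 0) := by
          have hco : Continuous (fun t : ℝ => t • ∑ i, (B : Fin n → Vr n) i) :=
            continuous_id.smul continuous_const
          simpa using hco.tendsto 0
        simpa using (tendsto_const_nhds (x := x)).add h1
      exact this.mono_left nhdsWithin_le_nhds
    refine mem_closure_of_tendsto htend ?_
    filter_upwards [self_mem_nhdsWithin] with t ht
    rw [mem_posSpan_iff]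
    intro i
    have : B.repr (x + t • ∑ j, B j) i = B.repr x i + t := by
      rw [map_add, map_smul]
      have : (B.repr (∑ j, B j)) i = 1 := by
        have := repr_sum_eq B (fun _ => (1:ℝ)) i
        simpa using this
      simp [this]
    rw [this]
    have := (mem_nonnegSpan_iff B x).mp hx i
    have ht' : 0 < t := ht
    linarith

/-- cone on a sub-family -/
def faceCone (v : Fin m → Vr n) (I : Finset (Fin m)) : Set (Vr n) :=
  {x | ∃ c : Fin m → ℝ, (∀ i, 0 ≤ c i) ∧ (∀ i, i ∉ I → c i = 0) ∧ x = ∑ i, c i • v i}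

lemma span_faceCone (v : Fin m → Vr n) (I : Finset (Fin m)) :
    Submodule.span ℝ (faceCone v I) = Submodule.span ℝ (v '' ↑I) := by
  apply le_antisymm
  · rw [Submodule.span_le]
    rintro x ⟨c, _, hc0, rfl⟩
    have : ∑ i ∈ I, c i • v i = ∑ i, c i • v i :=
      Finset.sum_subset (Finset.subset_univ I) (fun i _ hi => by rw [hc0 i hi, zero_smul])
    rw [← this]
    exact Submodule.sum_mem _ fun i hi =>
      Submodule.smul_mem _ _ (Submodule.subset_span ⟨i, hi, rfl⟩)
  · rw [Submodule.span_le]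
    rintro x ⟨i, hi, rfl⟩
    apply Submodule.subset_span
    refine ⟨fun j => if j = i then 1 else 0, ?_, ?_, ?_⟩
    · intro j; by_cases h : j = i <;> simp [h]
    · intro j hj; simp only [Finset.mem_coe] at hi
      have : j ≠ i := by rintro rfl; exact hj hi
      simp [this]
    · simp [Finset.sum_ite_eq']

lemma spanDim_faceCone {v : Fin m → Vr n} (hv : LinearIndependent ℝ v) (I : Finset (Fin m)) :
    spanDim (faceCone v I) = I.card := by
  rw [spanDim, span_faceCone]
  have himg : v '' ↑I = Set.range (v ∘ (Subtype.val : {i // i ∈ I} → Fin m)) := by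
    rw [Set.range_comp]; simp
  rw [himg]
  rw [finrank_span_eq_card (hv.comp Subtype.val Subtype.val_injective)]
  simp [Fintype.card_coe]

lemma inter_ker0_nonnegSpan (B : Module.Basis (Fin n) ℝ (Vr n)) (f : Vr n →ₗ[ℝ] ℝ)
    (hf : ∀ i, 0 ≤ f (B i)) :
    ker0 f ∩ nonnegSpan ⇑B = faceCone ⇑B (Finset.univ.filter fun i => f (B i) = 0) := by
  ext x
  constructor
  · rintro ⟨hx0, c, hc, rfl⟩
    have hfx : ∑ i, c i * f (B i) = 0 := by
      have : f (∑ i, c i • B i) = ∑ i, c i * f (B i) := by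
        rw [map_sum]; simp [map_smul]
      rw [← this]; exact hx0
    have hterm : ∀ i ∈ Finset.univ, c i * f (B i) = 0 :=
      (Finset.sum_eq_zero_iff_of_nonneg (fun i _ => mul_nonneg (hc i) (hf i))).mp hfx
    refine ⟨c, hc, ?_, rfl⟩
    intro i hi
    simp only [Finset.mem_filter, Finset.mem_univ, true_and] at hi
    have := hterm i (Finset.mem_univ i)
    rcases mul_eq_zero.mp this with h | h
    · exact h
    · exact absurd h hi
  · rintro ⟨c, hc, hc0, rfl⟩
    constructor
    · show f _ = 0
      rw [map_sum]
      apply Finset.sum_eq_zero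
      intro i _
      rcases eq_or_ne (c i) 0 with h | h
      · simp [h]
      · have : f (B i) = 0 := by
          by_contra h0
          exact h (hc0 i (by simp [h0]))
        simp [map_smul, this]
    · exact ⟨c, hc, rfl⟩

end StmtAux

namespace StmtAux

lemma int_eval_of_mem_span {V : Type*} [AddCommGroup V] [Module ℝ V]
    (κ : V →ₗ[ℝ] ℝ) {s : Set V} (hs : ∀ f ∈ s, ∃ k : ℤ, κ f = k) :
    ∀ f ∈ Submodule.span ℤ s, ∃ k : ℤ, κ f = k := by
  intro f hf
  induction hf using Submodule.span_induction with
  | mem x hx => exact hs x hx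
  | zero => exact ⟨0, by simp⟩
  | add x y _ _ hx hy =>
    obtain ⟨k, hk⟩ := hx; obtain ⟨l, hl⟩ := hy
    exact ⟨k + l, by push_cast; rw [map_add, hk, hl]⟩
  | smul a x _ hx =>
    obtain ⟨k, hk⟩ := hx
    exact ⟨a * k, by push_cast; rw [map_zsmul κ a x, hk]; simp⟩

lemma exists_gamma {V : Type*} [AddCommGroup V] [Module ℝ V]
    (C : Set V) (δ : V) (hδC : δ ∈ C) (hδ : δ ≠ 0)
    (κ : V →ₗ[ℝ] ℝ) (hκδ : κ δ ≠ 0)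
    (hint : ∀ f ∈ C, ∃ k : ℤ, κ f = k)
    (hprop : ∀ f ∈ C, ∃ c : ℝ, f = c • δ) :
    ∃ γ : V, γ ≠ 0 ∧ (∃ c : ℝ, c ≠ 0 ∧ γ = c • δ) ∧
      (∀ f ∈ C, ∃ k : ℤ, f = (k : ℝ) • γ) ∧ γ ∈ Submodule.span ℤ C := by
  classical
  set KS : Set ℤ := {k | ∃ f ∈ C, κ f = (k : ℝ)} with hKS
  set I : Submodule ℤ ℤ := Submodule.span ℤ KS with hI
  have hprin : I.IsPrincipal := IsPrincipalIdealRing.principal (I : Ideal ℤ)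
  set g : ℤ := @Submodule.IsPrincipal.generator ℤ ℤ _ _ _ I hprin with hg
  have hspan : Submodule.span ℤ {g} = I :=
    @Submodule.IsPrincipal.span_singleton_generator ℤ ℤ _ _ _ I hprin
  -- facts about coefficients
  have hcf : ∀ f ∈ C, f = (κ f / κ δ) • δ := by
    intro f hf
    obtain ⟨c, hc⟩ := hprop f hf
    have : κ f = c * κ δ := by rw [hc]; simp
    rw [this]; rw [mul_div_assoc, div_self hκδ, mul_one]; exact hc
  -- generator nonzero
  obtain ⟨kδ, hkδ⟩ := hint δ hδC
  have hkδ0 : kδ ≠ 0 := by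
    intro h; rw [h] at hkδ; simp at hkδ; exact hκδ hkδ
  have hkδKS : kδ ∈ KS := ⟨δ, hδC, hkδ⟩
  have hg0 : g ≠ 0 := by
    intro h
    have : kδ ∈ Submodule.span ℤ {g} := by rw [hspan]; exact Submodule.subset_span hkδKS
    rw [h, Submodule.span_zero_singleton] at this
    exact hkδ0 (by simpa using this)
  refine ⟨((g : ℝ) / κ δ) • δ, ?_, ⟨(g : ℝ) / κ δ, ?_, rfl⟩, ?_, ?_⟩
  · apply smul_ne_zero _ hδ
    exact div_ne_zero (Int.cast_ne_zero.mpr hg0) hκδ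
  · exact div_ne_zero (Int.cast_ne_zero.mpr hg0) hκδ
  · intro f hf
    obtain ⟨kf, hkf⟩ := hint f hf
    have hkfKS : kf ∈ KS := ⟨f, hf, hkf⟩
    have : kf ∈ Submodule.span ℤ {g} := by rw [hspan]; exact Submodule.subset_span hkfKS
    rw [Submodule.mem_span_singleton] at this
    obtain ⟨m, hm⟩ := this
    refine ⟨m, ?_⟩
    have hm2 : m * g = kf := by simpa using hm
    rw [hcf f hf, hkf, smul_smul]
    congr 1
    rw [← hm2]
    push_cast
    ring
  · -- γ ∈ span ℤ C
    have hgI : g ∈ I := by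
      rw [← hspan]; exact Submodule.subset_span rfl
    rw [hI] at hgI
    rw [Submodule.mem_span_set'] at hgI
    obtain ⟨N, a, w, hw⟩ := hgI
    -- pick f_i for each w i
    have hchoice : ∀ i : Fin N, ∃ f ∈ C, κ f = ((w i : ℤ) : ℝ) := fun i => (w i).2
    choose ff hffC hffκ using hchoice
    have hzs : ∀ (b : ℤ) (x : V), b • x = (b : ℝ) • x :=
      fun b x => (Int.cast_smul_eq_zsmul ℝ b x).symm
    have hsum : ((g : ℝ) / κ δ) • δ = ∑ i, a i • ff i := by
      have hffi : ∀ i : Fin N, ff i = (((w i : ℤ) : ℝ) / κ δ) • δ := by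
        intro i
        have := hcf (ff i) (hffC i)
        rw [hffκ i] at this
        exact this
      have hgsum : (g : ℝ) = ∑ i, (a i : ℝ) * ((w i : ℤ) : ℝ) := by
        have h2 := congrArg (fun z : ℤ => (z : ℝ)) hw.symm
        push_cast at h2
        simpa using h2
      rw [hgsum, Finset.sum_div, Finset.sum_smul]
      refine Finset.sum_congr rfl fun i _ => ?_
      rw [hffi i, hzs, smul_smul]
      congr 1
      ring
    rw [hsum]
    exact Submodule.sum_mem _ fun i _ =>
      Submodule.smul_mem _ _ (Submodule.subset_span (hffC i))

end StmtAux


namespace StmtAux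

variable {n m : ℕ}

lemma posSpan_convex (v : Fin m → Vr n) : Convex ℝ (posSpan v) := by
  rintro x ⟨c, hc, rfl⟩ y ⟨c', hc', rfl⟩ a b ha hb hab
  refine ⟨fun i => a * c i + b * c' i, ?_, ?_⟩
  · intro i
    rcases eq_or_lt_of_le ha with h | h
    · have hb1 : b = 1 := by linarith
      simp [← h, hb1]; exact hc' i
    · have h1 : 0 ≤ b * c' i := mul_nonneg hb (hc' i).le
      have h2 : 0 < a * c i := mul_pos h (hc i)
      show 0 < a * c i + b * c' i
      linarith
  · rw [Finset.smul_sum, Finset.smul_sum, ← Finset.sum_add_distrib]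
    refine Finset.sum_congr rfl fun i _ => ?_
    rw [smul_smul, smul_smul, add_smul]

lemma repr_sum_subset (B : Module.Basis (Fin n) ℝ (Vr n)) (s : Finset (Fin n)) (j : Fin n) :
    B.repr (∑ i ∈ s, B i) j = if j ∈ s then 1 else 0 := by
  rw [map_sum, Finsupp.finset_sum_apply]
  simp [Module.Basis.repr_self, Finsupp.single_apply, Finset.sum_ite_eq]

lemma mul_pos_self_add {a c : ℝ} (h : |c| < |a|) : 0 < a * (a + c) := by
  have h1 : -(|a| * |c|) ≤ a * c := by
    have := neg_abs_le (a * c)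
    rw [abs_mul] at this
    exact this
  have h2 : |a| * |c| < |a| * |a| :=
    mul_lt_mul_of_pos_left h (lt_of_le_of_lt (abs_nonneg c) h)
  rw [abs_mul_abs_self] at h2
  have : a * (a + c) = a * a + a * c := by ring
  rw [this]
  linarith

lemma sign_stable {a t c : ℝ} (ht : 0 < t) (hb : t * (|c| + 1) < |a|) :
    0 < a * (a + t * c) := by
  apply mul_pos_self_add
  have : |t * c| = t * |c| := by rw [abs_mul, abs_of_pos ht]
  rw [this]
  nlinarith

lemma pos_of_pos_mul {a b : ℝ} (ha : 0 < a) (hab : 0 < a * b) : 0 < b := by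
  nlinarith

end StmtAux

namespace StmtAux

variable {r d : ℕ}

lemma eval_repr (B : Module.Basis (Fin r) ℝ (Vr r)) (β : Vr r →ₗ[ℝ] ℝ) (u : Vr r) :
    β u = ∑ j, B.repr u j * β (B j) := by
  conv_lhs => rw [← B.sum_repr u]
  rw [map_sum]
  refine Finset.sum_congr rfl fun j _ => ?_
  rw [map_smul]; rfl

lemma basis_mem_nonnegSpan (B : Module.Basis (Fin r) ℝ (Vr r)) (i : Fin r) :
    (B i : Vr r) ∈ nonnegSpan ⇑B := by
  rw [mem_nonnegSpan_iff]
  intro j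
  rw [Module.Basis.repr_self]
  rcases eq_or_ne j i with h | h
  · simp [h]
  · simp [Finsupp.single_apply, h.symm]

/-- sign-constancy of `β ∈ R` on a closed chamber -/
lemma nonneg_on_closure (A : Finset (Set (Vr r))) (R : Finset (Vr r →ₗ[ℝ] ℝ))
    (hyps : (A : Set (Set (Vr r))) = (fun α => ker0 α) '' (R : Set (Vr r →ₗ[ℝ] ℝ)))
    {z : Vr r} (hz : z ∈ (⋃₀ (A : Set (Set (Vr r))))ᶜ)
    (B : Module.Basis (Fin r) ℝ (Vr r))
    (hKB : connectedComponentIn (⋃₀ (A : Set (Set (Vr r))))ᶜ z = posSpan ⇑B)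
    {β : Vr r →ₗ[ℝ] ℝ} (hβR : β ∈ R) (hβz : 0 < β z) :
    ∀ u ∈ nonnegSpan ⇑B, 0 ≤ β u := by
  have hcell := connectedComponentIn_eq_cell hyps hz
  have hcl : closure (posSpan ⇑B) = nonnegSpan ⇑B := closure_posSpan B
  have hsub : posSpan ⇑B ⊆ {u | 0 ≤ β u} := by
    intro u hu
    rw [← hKB, hcell] at hu
    have := hu β hβR
    exact (pos_of_pos_mul hβz this).le
  have hclosed : IsClosed {u | 0 ≤ β u} :=
    isClosed_le continuous_const β.continuous_of_finiteDimensional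
  intro u hu
  rw [← hcl] at hu
  exact closure_minimal hsub hclosed hu

/-- wall normals of a chamber exist in `R` -/
lemma wall_normals (A : Finset (Set (Vr r))) (R : Finset (Vr r →ₗ[ℝ] ℝ))
    (hcr : IsCrystArr A R)
    {z : Vr r} (hz : z ∈ (⋃₀ (A : Set (Set (Vr r))))ᶜ)
    (B : Module.Basis (Fin r) ℝ (Vr r))
    (hKB : connectedComponentIn (⋃₀ (A : Set (Set (Vr r))))ᶜ z = posSpan ⇑B)
    (i : Fin r) :
    ∃ β ∈ R, (∀ j, j ≠ i → β (B j) = 0) ∧ 0 < β (B i) := by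
  classical
  have hcell := connectedComponentIn_eq_cell hcr.hyps hz
  have hU := compl_sUnion_eq hcr.hyps
  have hzR : ∀ f ∈ R, f z ≠ 0 := by rw [hU] at hz; exact hz
  set q : Vr r := ∑ j ∈ Finset.univ.erase i, B j with hq
  have hq_repr : ∀ j, B.repr q j = if j ∈ Finset.univ.erase i then 1 else 0 :=
    fun j => repr_sum_subset B _ j
  have hqN : q ∈ nonnegSpan ⇑B := by
    rw [mem_nonnegSpan_iff]
    intro j; rw [hq_repr j]; split <;> norm_num
  have hqcl : q ∈ closure (posSpan ⇑B) := by rw [closure_posSpan B]; exact hqN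
  by_cases hqA : q ∈ ⋃₀ (A : Set (Set (Vr r)))
  · -- q lies on a hyperplane, get the wall normal
    obtain ⟨H, hH, hqH⟩ := Set.mem_sUnion.mp hqA
    rw [hcr.hyps] at hH
    obtain ⟨β, hβR, rfl⟩ := hH
    have hβq : β q = 0 := hqH
    set β' : Vr r →ₗ[ℝ] ℝ := if 0 < β z then β else -β with hβ'
    have hβ'R : β' ∈ R := by
      rw [hβ']; split
      · exact hβR
      · exact hcr.neg_mem β hβR
    have hβ'z : 0 < β' z := by
      rw [hβ']; split
      · assumption
      · rename_i h
        have := hzR β hβR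
        simp only [LinearMap.neg_apply]
        rcases this.lt_or_gt with h1 | h1
        · linarith
        · exact absurd h1 h
    have hβ'q : β' q = 0 := by
      rw [hβ']; split
      · exact hβq
      · simp [hβq]
    have hnn : ∀ u ∈ nonnegSpan ⇑B, 0 ≤ β' u :=
      nonneg_on_closure A R hcr.hyps hz B hKB hβ'R hβ'z
    have hterm : ∀ j ∈ Finset.univ.erase i, β' (B j) = 0 := by
      have hqsum : ∑ j ∈ Finset.univ.erase i, β' (B j) = 0 := by
        rw [← hβ'q, hq, map_sum]
      exact (Finset.sum_eq_zero_iff_of_nonneg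
        (fun j _ => hnn _ (basis_mem_nonnegSpan B j))).mp hqsum
    have hβ'i : 0 < β' (B i) := by
      rcases lt_or_eq_of_le (hnn _ (basis_mem_nonnegSpan B i)) with h | h
      · exact h
      · exfalso
        apply hcr.nonzero β' hβ'R
        apply Module.Basis.ext B
        intro j
        rcases eq_or_ne j i with rfl | hne
        · rw [LinearMap.zero_apply, ← h]
        · rw [LinearMap.zero_apply]
          exact hterm j (Finset.mem_erase.mpr ⟨hne, Finset.mem_univ j⟩)
    exact ⟨β', hβ'R, fun j hj => hterm j (Finset.mem_erase.mpr ⟨hj, Finset.mem_univ j⟩), hβ'i⟩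
  · -- impossible: q would be in the open chamber
    exfalso
    have hqU : q ∈ (⋃₀ (A : Set (Set (Vr r))))ᶜ := hqA
    have hqR : ∀ f ∈ R, f q ≠ 0 := by rw [hU] at hqU; exact hqU
    have hopen : IsOpen (cell R q) := cell_open R q
    have hqcell : q ∈ cell R q := mem_cell_self hqR
    have hKq : q ∈ closure (connectedComponentIn (⋃₀ (A : Set (Set (Vr r))))ᶜ z) := by
      rw [hKB]; exact hqcl
    obtain ⟨p, hp1, hp2⟩ := (_root_.mem_closure_iff.mp hKq (cell R q) hopen hqcell)
    rw [hcell] at hp2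
    have h1 : cell R p = cell R q := cell_eq_of_mem hp1
    have h2 : cell R p = cell R z := cell_eq_of_mem hp2
    have : q ∈ cell R z := by rw [← h2, h1]; exact hqcell
    rw [← hcell, hKB, mem_posSpan_iff] at this
    have := this i
    rw [hq_repr i] at this
    simp at this
end StmtAux

namespace StmtAux

set_option maxHeartbeats 2000000 in
/-- MASTER: structure of a chamber of the restricted arrangement -/
lemma master {r d : ℕ} (A : Finset (Set (Vr r))) (R : Finset (Vr r →ₗ[ℝ] ℝ))
    (hcr : IsCrystArr A R)
    (φ : Vr d →ₗ[ℝ] Vr r) (hinj : Function.Injective φ)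
    (S' : Finset (Vr r →ₗ[ℝ] ℝ)) (hS'R : ∀ α ∈ S', α ∈ R) (hS'ne : S'.Nonempty)
    (hran : Set.range φ = {x : Vr r | ∀ α ∈ S', α x = 0})
    (A' : Finset (Set (Vr d)))
    (hA'def : A' = (A.filter (fun H => ¬ {x : Vr r | ∀ α ∈ S', α x = 0} ⊆ H)).image
      (fun H => φ ⁻¹' H))
    (x₀ : Vr d) (hx₀ : x₀ ∈ (⋃₀ (A' : Set (Set (Vr d))))ᶜ) :
    ∃ (v : Fin d → Vr d) (lam : Fin d → (Vr d →ₗ[ℝ] ℝ)),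
      LinearIndependent ℝ v ∧
      connectedComponentIn (⋃₀ (A' : Set (Set (Vr d))))ᶜ x₀ = posSpan v ∧
      (∀ i, ∃ β ∈ R, lam i = β ∘ₗ φ) ∧
      (∀ i j, i ≠ j → lam i (v j) = 0) ∧
      (∀ i, 0 < lam i (v i)) ∧
      (∀ β ∈ R, β ∘ₗ φ ∈ Submodule.span ℤ (Set.range lam)) := by
  classical
  set ES : Set (Vr r) := {x : Vr r | ∀ α ∈ S', α x = 0} with hES
  -- the restricted functionals
  set T' : Finset (Vr d →ₗ[ℝ] ℝ) :=
    (R.filter (fun β => ¬ ES ⊆ ker0 β)).image (fun β => β ∘ₗ φ) with hT'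
  have hker0comp : ∀ β : Vr r →ₗ[ℝ] ℝ, ker0 (β ∘ₗ φ) = φ ⁻¹' (ker0 β) := by
    intro β; rfl
  have hcompzero : ∀ β : Vr r →ₗ[ℝ] ℝ, (β ∘ₗ φ = 0 ↔ ES ⊆ ker0 β) := by
    intro β
    constructor
    · intro h0 x hx
      rw [← hran] at hx
      obtain ⟨u, rfl⟩ := hx
      show β (φ u) = 0
      have := congrArg (fun f : Vr d →ₗ[ℝ] ℝ => f u) h0
      simpa using this
    · intro hsub
      apply LinearMap.ext
      intro u
      have : φ u ∈ ES := by rw [← hran]; exact ⟨u, rfl⟩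
      exact hsub this
  have hT'A' : (A' : Set (Set (Vr d))) = (fun f => ker0 f) '' (T' : Set _) := by
    rw [hA'def, hT']
    ext h
    simp only [Finset.coe_image, Finset.coe_filter, Set.mem_image, Set.mem_setOf_eq,
      Finset.mem_coe]
    constructor
    · rintro ⟨H, ⟨hHA, hHsub⟩, rfl⟩
      have hHA' : H ∈ (A : Set (Set (Vr r))) := hHA
      rw [hcr.hyps] at hHA'
      obtain ⟨β, hβR, rfl⟩ := hHA'
      exact ⟨β ∘ₗ φ, ⟨β, ⟨hβR, hHsub⟩, rfl⟩, (hker0comp β).symm⟩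
    · rintro ⟨f, ⟨β, ⟨hβR, hβsub⟩, rfl⟩, rfl⟩
      refine ⟨ker0 β, ⟨?_, hβsub⟩, (hker0comp β)⟩
      have : ker0 β ∈ (A : Set (Set (Vr r))) := by
        rw [hcr.hyps]; exact ⟨β, hβR, rfl⟩
      exact this
  have hT'ne : ∀ f ∈ T', f ≠ 0 := by
    intro f hf
    rw [hT'] at hf
    obtain ⟨β, hβ, rfl⟩ := Finset.mem_image.mp hf
    obtain ⟨hβR, hβsub⟩ := Finset.mem_filter.mp hβ
    intro h0
    exact hβsub ((hcompzero β).mp h0)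
  have hU' := compl_sUnion_eq hT'A'
  have hcc := connectedComponentIn_eq_cell hT'A' hx₀
  have hx₀T' : ∀ f ∈ T', f x₀ ≠ 0 := by rw [hU'] at hx₀; exact hx₀
  -- r ≥ 1
  have hrpos : 0 < r := by
    by_contra h
    push_neg at h
    have hr0 : r = 0 := by omega
    subst hr0
    obtain ⟨α, hα⟩ := hS'ne
    exact hcr.nonzero α (hS'R α hα) (zero_of_subsingleton α)
  haveI : Nonempty (Fin r) := ⟨⟨0, hrpos⟩⟩
  -- choose x in the cell minimizing the number of vanishing roots
  have hPex : ∃ N, ∃ x ∈ cell T' x₀, (R.filter fun α => α (φ x) = 0).card = N :=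
    ⟨_, x₀, mem_cell_self hx₀T', rfl⟩
  obtain ⟨x, hxcell, hxcard⟩ := Nat.find_spec hPex
  have hxmin : ∀ x' ∈ cell T' x₀,
      Nat.find hPex ≤ (R.filter fun α => α (φ x') = 0).card := by
    intro x' hx'
    exact Nat.find_le ⟨x', hx', rfl⟩
  set y : Vr r := φ x with hy
  -- minimality: vanishing roots vanish identically on the range of φ
  have hZ : ∀ β ∈ R, β y = 0 → β ∘ₗ φ = 0 := by
    intro β₀ hβ₀R hβ₀y
    by_contra hne
    obtain ⟨u, hu⟩ := exists_apply_ne_zero hne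
    -- perturbation threshold
    set Rp : Finset (Vr r →ₗ[ℝ] ℝ) := R.filter (fun β => β y ≠ 0) with hRp
    set ε₀ : ℝ := if hn : Rp.Nonempty then
      Rp.inf' hn (fun β => |β y| / (|β (φ u)| + 1)) else 1 with hε₀
    have hε₀pos : 0 < ε₀ := by
      rw [hε₀]; split
      · rename_i hn
        rw [Finset.lt_inf'_iff]
        intro β hβ
        have hβy : β y ≠ 0 := (Finset.mem_filter.mp hβ).2
        positivity
      · norm_num
    have hε₀le : ∀ β ∈ Rp, ε₀ ≤ |β y| / (|β (φ u)| + 1) := by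
      intro β hβ
      rw [hε₀]
      split
      · exact Finset.inf'_le _ hβ
      · rename_i hn
        exact absurd ⟨β, hβ⟩ hn
    set ε : ℝ := ε₀ / 2 with hε
    have hεpos : 0 < ε := by positivity
    set x' : Vr d := x + ε • u with hx'
    have hφx' : φ x' = y + ε • φ u := by
      rw [hx', map_add, map_smul]
    -- sign preservation
    have hsign : ∀ β ∈ R, β y ≠ 0 → 0 < β y * β (φ x') := by
      intro β hβR hβy
      rw [hφx', map_add, map_smul]
      have hble : ε * (|β (φ u)| + 1) < |β y| := by
        have h1 : ε₀ ≤ |β y| / (|β (φ u)| + 1) :=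
          hε₀le β (Finset.mem_filter.mpr ⟨hβR, hβy⟩)
        have h2 : 0 < |β (φ u)| + 1 := by positivity
        have h3 : ε < ε₀ := by rw [hε]; linarith
        calc ε * (|β (φ u)| + 1) < ε₀ * (|β (φ u)| + 1) := by
              exact mul_lt_mul_of_pos_right h3 h2
          _ ≤ (|β y| / (|β (φ u)| + 1)) * (|β (φ u)| + 1) := by
              exact mul_le_mul_of_nonneg_right h1 h2.le
          _ = |β y| := by field_simp
      exact sign_stable hεpos hble
    -- x' is in the same cell
    have hx'cell : x' ∈ cell T' x₀ := by
      rw [← cell_eq_of_mem hxcell]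
      intro f hf
      obtain ⟨β, hβ, rfl⟩ := Finset.mem_image.mp (hT' ▸ hf)
      obtain ⟨hβR, _⟩ := Finset.mem_filter.mp hβ
      have hfx : (β ∘ₗ φ) x ≠ 0 := by
        intro h0
        have := hxcell _ hf
        rw [h0, mul_zero] at this
        exact lt_irrefl 0 this
      exact hsign β hβR hfx
    -- the vanishing set strictly decreases
    have hsubset : (R.filter fun α => α (φ x') = 0) ⊆ (R.filter fun α => α (φ x) = 0) := by
      intro α hα
      obtain ⟨hαR, hα0⟩ := Finset.mem_filter.mp hα
      refine Finset.mem_filter.mpr ⟨hαR, ?_⟩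
      by_contra hαy
      have := hsign α hαR hαy
      rw [hα0, mul_zero] at this
      exact lt_irrefl 0 this
    have hstrict : (R.filter fun α => α (φ x') = 0) ⊂ (R.filter fun α => α (φ x) = 0) := by
      rw [Finset.ssubset_iff_of_subset hsubset]
      refine ⟨β₀, Finset.mem_filter.mpr ⟨hβ₀R, hβ₀y⟩, ?_⟩
      intro hmem
      have := (Finset.mem_filter.mp hmem).2
      rw [hφx', map_add, map_smul, hβ₀y, zero_add] at this
      simp only [smul_eq_mul] at this
      rcases mul_eq_zero.mp this with h | h
      · exact hεpos.ne' h
      · exact hu h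
    have hlt := Finset.card_lt_card hstrict
    rw [hxcard] at hlt
    exact absurd (hxmin x' hx'cell) (by omega)
  -- build a chamber of A adjacent to y
  obtain ⟨w, hw⟩ := exists_forall_ne_zero R hcr.nonzero
  set Rp : Finset (Vr r →ₗ[ℝ] ℝ) := R.filter (fun β => β y ≠ 0) with hRp
  set ε₀ : ℝ := if hn : Rp.Nonempty then
    Rp.inf' hn (fun β => |β y| / (|β w| + 1)) else 1 with hε₀
  have hε₀pos : 0 < ε₀ := by
    rw [hε₀]; split
    · rename_i hn
      rw [Finset.lt_inf'_iff]
      intro β hβ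
      have hβy : β y ≠ 0 := (Finset.mem_filter.mp hβ).2
      positivity
    · norm_num
  have hε₀le : ∀ β ∈ R, β y ≠ 0 → ε₀ ≤ |β y| / (|β w| + 1) := by
    intro β hβ hβy
    rw [hε₀]
    split
    · exact Finset.inf'_le _ (Finset.mem_filter.mpr ⟨hβ, hβy⟩)
    · rename_i hn
      exact absurd ⟨β, Finset.mem_filter.mpr ⟨hβ, hβy⟩⟩ hn
  have hbound : ∀ β ∈ R, β y ≠ 0 → ∀ t : ℝ, 0 < t → t < ε₀ → t * (|β w| + 1) < |β y| := by
    intro β hβ hβy t ht ht'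
    have h1 := hε₀le β hβ hβy
    have h2 : 0 < |β w| + 1 := by positivity
    calc t * (|β w| + 1) < ε₀ * (|β w| + 1) := mul_lt_mul_of_pos_right ht' h2
      _ ≤ (|β y| / (|β w| + 1)) * (|β w| + 1) := mul_le_mul_of_nonneg_right h1 h2.le
      _ = |β y| := by field_simp
  -- the points y + t w for 0 < t < ε₀ all lie in one chamber
  have hsig : ∀ t : ℝ, 0 < t → t < ε₀ → ∀ β ∈ R,
      (β y ≠ 0 → 0 < β y * β (y + t • w)) ∧ (β y = 0 → β (y + t • w) = t * β w) := by
    intro t ht ht' β hβ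
    constructor
    · intro hβy
      rw [map_add, map_smul]
      exact sign_stable ht (hbound β hβ hβy t ht ht')
    · intro hβy
      rw [map_add, map_smul, hβy, zero_add]; rfl
  set ε : ℝ := ε₀ / 2 with hεdef
  have hεpos : 0 < ε := by positivity
  have hεlt : ε < ε₀ := by rw [hεdef]; linarith
  set z : Vr r := y + ε • w with hzdef
  have hzR : ∀ β ∈ R, β z ≠ 0 := by
    intro β hβ
    rcases eq_or_ne (β y) 0 with h0 | h0
    · rw [(hsig ε hεpos hεlt β hβ).2 h0]
      exact mul_ne_zero hεpos.ne' (hw β hβ)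
    · have := (hsig ε hεpos hεlt β hβ).1 h0
      intro hc; rw [hc, mul_zero] at this; exact lt_irrefl 0 this
  have hUA := compl_sUnion_eq hcr.hyps
  have hzU : z ∈ (⋃₀ (A : Set (Set (Vr r))))ᶜ := by rw [hUA]; exact hzR
  have hKch : connectedComponentIn (⋃₀ (A : Set (Set (Vr r))))ᶜ z ∈ chambers A :=
    ⟨z, hzU, rfl⟩
  obtain ⟨b, hbind, hbK⟩ := hcr.simplicial _ hKch
  have hcard : Fintype.card (Fin r) = Module.finrank ℝ (Vr r) := by
    rw [Module.finrank_pi]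
  set B : Module.Basis (Fin r) ℝ (Vr r) := basisOfLinearIndependentOfCardEqFinrank hbind hcard
    with hBdef
  have hBb : ⇑B = b := coe_basisOfLinearIndependentOfCardEqFinrank hbind hcard
  have hKB : connectedComponentIn (⋃₀ (A : Set (Set (Vr r))))ᶜ z = posSpan ⇑B := by
    rw [hBb, hbK]; rfl
  have hcellz := connectedComponentIn_eq_cell hcr.hyps hzU
  -- y lies in the closed chamber
  have hyN : y ∈ nonnegSpan ⇑B := by
    rw [← closure_posSpan B, ← hKB, hcellz]
    have htend : Filter.Tendsto (fun t : ℝ => y + t • w) (nhdsWithin 0 (Set.Ioi 0)) (nhds y) := by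
      have hco : Continuous (fun t : ℝ => y + t • w) :=
        continuous_const.add (continuous_id.smul continuous_const)
      have := hco.tendsto 0
      simp only [zero_smul, add_zero] at this
      exact this.mono_left nhdsWithin_le_nhds
    refine mem_closure_of_tendsto htend ?_
    filter_upwards [Ioo_mem_nhdsGT_of_mem (Set.left_mem_Ico.mpr hε₀pos)] with t ht
    intro β hβ
    rcases eq_or_ne (β y) 0 with h0 | h0
    · rw [(hsig ε hεpos hεlt β hβ).2 h0, (hsig t ht.1 ht.2 β hβ).2 h0]
      have := hw β hβ
      have h1 : 0 < ε * t := mul_pos hεpos ht.1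
      have h2 : 0 < β w * β w := mul_self_pos.mpr this
      calc (0:ℝ) < (ε * t) * (β w * β w) := mul_pos h1 h2
        _ = ε * β w * (t * β w) := by ring
    · exact sign_trans ((hsig ε hεpos hεlt β hβ).1 h0) ((hsig t ht.1 ht.2 β hβ).1 h0)
  have hyc : ∀ i, 0 ≤ B.repr y i := (mem_nonnegSpan_iff B y).mp hyN
  set J : Finset (Fin r) := Finset.univ.filter (fun i => B.repr y i ≠ 0) with hJ
  have hJpos : ∀ j ∈ J, 0 < B.repr y j := by
    intro j hj
    have := (Finset.mem_filter.mp hj).2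
    rcases (hyc j).lt_or_eq with h | h
    · exact h
    · exact absurd h.symm this
  -- wall normals
  have hWall := fun i => wall_normals A R hcr hzU B hKB i
  choose βW hβWR hβW0 hβWpos using hWall
  -- expansion of evaluation
  have heval : ∀ (β : Vr r →ₗ[ℝ] ℝ) (u : Vr r), β u = ∑ j, B.repr u j * β (B j) :=
    fun β u => eval_repr B β u
  have hβWy : ∀ i, βW i y = B.repr y i * βW i (B i) := by
    intro i
    rw [heval (βW i) y]
    rw [Finset.sum_eq_single i]
    · intro j _ hj
      rw [hβW0 i j hj, mul_zero]
    · intro h; exact absurd (Finset.mem_univ i) h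
  -- roots vanishing outside J kill the range of φ
  have hEJ : ∀ i, i ∉ J → βW i ∘ₗ φ = 0 := by
    intro i hi
    apply hZ (βW i) (hβWR i)
    rw [hβWy i]
    have : B.repr y i = 0 := by
      by_contra h
      exact hi (Finset.mem_filter.mpr ⟨Finset.mem_univ i, h⟩)
    rw [this, zero_mul]
  -- coordinates of range φ vanish outside J
  have hrepr0 : ∀ u : Vr d, ∀ i, i ∉ J → B.repr (φ u) i = 0 := by
    intro u i hi
    have h0 : βW i (φ u) = 0 := by
      have := congrArg (fun f : Vr d →ₗ[ℝ] ℝ => f u) (hEJ i hi)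
      simpa using this
    rw [heval (βW i) (φ u), Finset.sum_eq_single i] at h0
    · rcases mul_eq_zero.mp h0 with h | h
      · exact h
      · exact absurd h (hβWpos i).ne'
    · intro j _ hj
      rw [hβW0 i j hj, mul_zero]
    · intro h; exact absurd (Finset.mem_univ i) h
  -- basis vectors indexed by J lie in range φ
  have hbJE : ∀ j ∈ J, (B j : Vr r) ∈ Set.range φ := by
    intro j hj
    rw [hran]
    intro α hα
    have hαR := hS'R α hα
    have hαy : α y = 0 := by
      have : y ∈ Set.range φ := ⟨x, rfl⟩
      rw [hran] at this
      exact this α hα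
    have hαz := hzR α hαR
    -- sign-normalize
    set α' : Vr r →ₗ[ℝ] ℝ := if 0 < α z then α else -α with hα'
    have hα'R : α' ∈ R := by
      rw [hα']; split
      · exact hαR
      · exact hcr.neg_mem α hαR
    have hα'z : 0 < α' z := by
      rw [hα']; split
      · assumption
      · rename_i h
        simp only [LinearMap.neg_apply]
        rcases hαz.lt_or_gt with h1 | h1
        · linarith
        · exact absurd h1 h
    have hα'y : α' y = 0 := by
      rw [hα']; split
      · exact hαy
      · simp [hαy]
    have hnn : ∀ u ∈ nonnegSpan ⇑B, 0 ≤ α' u :=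
      nonneg_on_closure A R hcr.hyps hzU B hKB hα'R hα'z
    have hsum : ∑ j', B.repr y j' * α' (B j') = 0 := by
      rw [← heval α' y, hα'y]
    have hterm : ∀ j' ∈ Finset.univ, B.repr y j' * α' (B j') = 0 :=
      (Finset.sum_eq_zero_iff_of_nonneg
        (fun j' _ => mul_nonneg (hyc j') (hnn _ (basis_mem_nonnegSpan B j')))).mp hsum
    have hj0 : α' (B j) = 0 := by
      have := hterm j (Finset.mem_univ j)
      rcases mul_eq_zero.mp this with h | h
      · exact absurd h (Finset.mem_filter.mp hj).2
      · exact h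
    rw [hα'] at hj0
    by_cases hc : 0 < α z
    · rw [if_pos hc] at hj0; exact hj0
    · rw [if_neg hc] at hj0
      simp only [LinearMap.neg_apply, neg_eq_zero] at hj0
      exact hj0
  -- span of (B j), j ∈ J equals range φ
  set Kc : Set (Vr r) := connectedComponentIn (⋃₀ (A : Set (Set (Vr r))))ᶜ z with hKc
  have hKcB : Kc = posSpan ⇑B := hKB
  have hclosK : closure Kc = nonnegSpan ⇑B := by rw [hKcB, closure_posSpan]
  have hWr : Submodule.span ℝ (⇑B '' ↑J) = LinearMap.range φ := by
    apply le_antisymm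
    · rw [Submodule.span_le]
      rintro _ ⟨j, hj, rfl⟩
      rw [LinearMap.coe_range]
      exact hbJE j hj
    · rintro _ ⟨u, rfl⟩
      have hsum : ∑ i ∈ J, B.repr (φ u) i • B i = ∑ i, B.repr (φ u) i • B i := by
        refine Finset.sum_subset (Finset.subset_univ J) (fun i _ hi => ?_)
        rw [hrepr0 u i hi, zero_smul]
      have : φ u = ∑ i ∈ J, B.repr (φ u) i • B i := by
        rw [hsum, B.sum_repr]
      rw [this]
      exact Submodule.sum_mem _ fun i hi =>
        Submodule.smul_mem _ _ (Submodule.subset_span ⟨i, hi, rfl⟩)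
  have hJcard : J.card = d := by
    have h1 : Module.finrank ℝ (Submodule.span ℝ (⇑B '' ↑J)) = J.card := by
      have himg : ⇑B '' ↑J = Set.range (⇑B ∘ (Subtype.val : {i // i ∈ J} → Fin r)) := by
        rw [Set.range_comp]; simp
      rw [himg, finrank_span_eq_card (B.linearIndependent.comp Subtype.val Subtype.val_injective)]
      simp [Fintype.card_coe]
    have h2 : Module.finrank ℝ (LinearMap.range φ) = d := by
      rw [LinearMap.finrank_range_of_inj hinj, Module.finrank_pi, Fintype.card_fin]
    rw [hWr] at h1
    rw [h2] at h1
    exact h1.symm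
  set e : Fin d ≃ {j // j ∈ J} := ((J.equivFin).trans (finCongr hJcard)).symm with he
  have hbe : ∀ i : Fin d, (B ((e i : Fin r)) : Vr r) ∈ Set.range φ :=
    fun i => hbJE _ (e i).2
  choose v hvφ using hbe
  have hvind : LinearIndependent ℝ v := by
    have hcompind : LinearIndependent ℝ (φ ∘ v) := by
      have : φ ∘ v = (⇑B ∘ fun i : Fin d => ((e i : Fin r))) := funext hvφ
      rw [this]
      exact B.linearIndependent.comp _
        (fun i j hij => e.injective (Subtype.val_injective hij))
    exact LinearIndependent.of_comp φ hcompind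
  set lam : Fin d → (Vr d →ₗ[ℝ] ℝ) := fun i => βW ((e i : Fin r)) ∘ₗ φ with hlam
  have hβWev : ∀ (i : Fin r) (u' : Vr r), βW i u' = B.repr u' i * βW i (B i) := by
    intro i u'
    rw [heval (βW i) u', Finset.sum_eq_single i]
    · intro j _ hj
      rw [hβW0 i j hj, mul_zero]
    · intro h; exact absurd (Finset.mem_univ i) h
  have hlamv : ∀ i j : Fin d, lam i (v j) = βW ((e i : Fin r)) (B ((e j : Fin r))) := by
    intro i j
    rw [hlam]
    show βW ((e i : Fin r)) (φ (v j)) = _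
    rw [hvφ j]
  have hlam0 : ∀ i j : Fin d, i ≠ j → lam i (v j) = 0 := by
    intro i j hij
    rw [hlamv i j]
    apply hβW0
    intro hc
    exact hij (e.injective (Subtype.val_injective hc)).symm
  have hlampos : ∀ i : Fin d, 0 < lam i (v i) := by
    intro i
    rw [hlamv i i]
    exact hβWpos _
  -- membership of wall restrictions in T'
  have hxT' : ∀ f ∈ T', f x ≠ 0 := by
    intro f hf h0
    have := hxcell f hf
    rw [h0, mul_zero] at this
    exact lt_irrefl 0 this
  have hβWyJ : ∀ j ∈ J, 0 < βW j y := by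
    intro j hj
    rw [hβWev j y]
    exact mul_pos (hJpos j hj) (hβWpos j)
  have hT'memβW : ∀ j ∈ J, βW j ∘ₗ φ ∈ T' := by
    intro j hj
    rw [hT']
    apply Finset.mem_image.mpr
    refine ⟨βW j, Finset.mem_filter.mpr ⟨hβWR j, ?_⟩, rfl⟩
    rw [← hcompzero]
    intro h0
    have : (βW j ∘ₗ φ) x = 0 := by rw [h0]; rfl
    have h1 : βW j y ≠ 0 := (hβWyJ j hj).ne'
    exact h1 this
  -- cell = posSpan v
  have hsubset1 : cell T' x ⊆ posSpan v := by
    intro u hu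
    have haJ : ∀ j ∈ J, 0 < B.repr (φ u) j := by
      intro j hj
      have hf := hu _ (hT'memβW j hj)
      have hfx : (0:ℝ) < (βW j ∘ₗ φ) x := hβWyJ j hj
      have hfu : 0 < (βW j ∘ₗ φ) u := pos_of_pos_mul hfx hf
      have : (βW j ∘ₗ φ) u = B.repr (φ u) j * βW j (B j) := hβWev j (φ u)
      rw [this] at hfu
      nlinarith [hβWpos j]
    have hexp : φ u = φ (∑ k : Fin d, B.repr (φ u) ((e k : Fin r)) • v k) := by
      rw [map_sum]
      have : ∀ k : Fin d, φ (B.repr (φ u) ((e k : Fin r)) • v k)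
          = B.repr (φ u) ((e k : Fin r)) • B ((e k : Fin r)) := by
        intro k
        rw [map_smul, hvφ k]
      rw [Finset.sum_congr rfl (fun k _ => this k)]
      have hsum : ∑ i ∈ J, B.repr (φ u) i • B i = ∑ i, B.repr (φ u) i • B i := by
        refine Finset.sum_subset (Finset.subset_univ J) (fun i _ hi => ?_)
        rw [hrepr0 u i hi, zero_smul]
      have hre : ∑ k : Fin d, B.repr (φ u) ((e k : Fin r)) • B ((e k : Fin r))
          = ∑ i ∈ J, B.repr (φ u) i • B i := by
        rw [← Finset.sum_coe_sort J (fun i => B.repr (φ u) i • B i)]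
        exact (Equiv.sum_comp e (fun s : {j // j ∈ J} =>
          B.repr (φ u) (s : Fin r) • B (s : Fin r)))
      rw [hre, hsum, B.sum_repr]
    have := hinj hexp
    exact ⟨fun k => B.repr (φ u) ((e k : Fin r)), fun k => haJ _ (e k).2, this⟩
  have hsubset2 : posSpan v ⊆ (⋃₀ (A' : Set (Set (Vr d))))ᶜ := by
    rintro _ ⟨c, hcpos, rfl⟩
    rw [hU']
    intro f hf
    obtain ⟨β, hβmem, rfl⟩ := Finset.mem_image.mp (hT' ▸ hf)
    obtain ⟨hβR, hβsub⟩ := Finset.mem_filter.mp hβmem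
    -- sign-normalize β
    have hβz := hzR β hβR
    set β' : Vr r →ₗ[ℝ] ℝ := if 0 < β z then β else -β with hβ'
    have hβ'R : β' ∈ R := by
      rw [hβ']; split
      · exact hβR
      · exact hcr.neg_mem β hβR
    have hβ'z : 0 < β' z := by
      rw [hβ']; split
      · assumption
      · rename_i h
        simp only [LinearMap.neg_apply]
        rcases hβz.lt_or_gt with h1 | h1
        · linarith
        · exact absurd h1 h
    have hnn : ∀ u ∈ nonnegSpan ⇑B, 0 ≤ β' u :=
      nonneg_on_closure A R hcr.hyps hzU B hKB hβ'R hβ'z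
    have hnotall : ∃ k : Fin d, β' (B ((e k : Fin r))) ≠ 0 := by
      by_contra hall
      push_neg at hall
      have hβ'φ : β' ∘ₗ φ = 0 := by
        apply LinearMap.ext
        intro u''
        show β' (φ u'') = 0
        rw [heval β' (φ u'')]
        apply Finset.sum_eq_zero
        intro i _
        by_cases hiJ : i ∈ J
        · have : β' (B i) = 0 := by
            have := hall (e.symm ⟨i, hiJ⟩)
            rwa [Equiv.apply_symm_apply] at this
          rw [this, mul_zero]
        · rw [hrepr0 u'' i hiJ, zero_mul]
      have : ES ⊆ ker0 β' := (hcompzero β').mp hβ'φ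
      apply hβsub
      rw [hβ'] at this
      by_cases hc : 0 < β z
      · rwa [if_pos hc] at this
      · rw [if_neg hc] at this
        rwa [ker0_neg] at this
    obtain ⟨k₀, hk₀⟩ := hnotall
    have hval : β' (φ (∑ k, c k • v k)) = ∑ k, c k * β' (B ((e k : Fin r))) := by
      rw [map_sum, map_sum]
      refine Finset.sum_congr rfl fun k _ => ?_
      rw [map_smul, map_smul, hvφ k]; rfl
    have hpos : 0 < β' (φ (∑ k, c k • v k)) := by
      rw [hval]
      apply Finset.sum_pos'
      · intro k _
        exact mul_nonneg (hcpos k).le (hnn _ (basis_mem_nonnegSpan B _))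
      · refine ⟨k₀, Finset.mem_univ k₀, ?_⟩
        have h1 : 0 < β' (B ((e k₀ : Fin r))) :=
          lt_of_le_of_ne (hnn _ (basis_mem_nonnegSpan B _)) (Ne.symm hk₀)
        exact mul_pos (hcpos k₀) h1
    intro h0
    have hβφ : β (φ (∑ k, c k • v k)) = 0 := h0
    rw [hβ'] at hpos
    by_cases hc : 0 < β z
    · rw [if_pos hc, hβφ] at hpos; exact lt_irrefl 0 hpos
    · rw [if_neg hc] at hpos
      simp only [LinearMap.neg_apply] at hpos
      rw [hβφ] at hpos
      simp at hpos
  have hx_in : x ∈ posSpan v := hsubset1 (mem_cell_self hxT')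
  have hxU' : x ∈ (⋃₀ (A' : Set (Set (Vr d))))ᶜ := by
    rw [hU']; exact hxT'
  have hccKd : connectedComponentIn (⋃₀ (A' : Set (Set (Vr d))))ᶜ x₀ = posSpan v := by
    apply Set.Subset.antisymm
    · rw [hcc, ← cell_eq_of_mem hxcell]
      exact hsubset1
    · have hx_in_cc : x ∈ connectedComponentIn (⋃₀ (A' : Set (Set (Vr d))))ᶜ x₀ := by
        rw [hcc]; exact hxcell
      rw [connectedComponentIn_eq hx_in_cc]
      exact IsPreconnected.subset_connectedComponentIn
        ((posSpan_convex v).isPreconnected) hx_in hsubset2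
  refine ⟨v, lam, hvind, hccKd, ?_, hlam0, hlampos, ?_⟩
  · intro i
    exact ⟨βW ((e i : Fin r)), hβWR _, rfl⟩
  -- integrality
  · intro β hβ
    have hint := hcr.integral _ hKch β hβ
    set Φ : (Vr r →ₗ[ℝ] ℝ) →ₗ[ℤ] (Vr d →ₗ[ℝ] ℝ) :=
      (LinearMap.lcomp ℝ ℝ φ).restrictScalars ℤ with hΦdef
    have hΦ : ∀ g : Vr r →ₗ[ℝ] ℝ, Φ g = g ∘ₗ φ := fun g => rfl
    have hmap := Submodule.apply_mem_span_image_of_mem_span (f := Φ) hint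
    rw [hΦ] at hmap
    refine Submodule.span_le.mpr ?_ hmap
    rintro _ ⟨α, hαBK, rfl⟩
    rw [hΦ]
    show α ∘ₗ φ ∈ (Submodule.span ℤ (Set.range lam) : Set (Vr d →ₗ[ℝ] ℝ))
    -- analyze α ∈ BK
    have hαBK' : α ∈ BK A R Kc := Finset.mem_coe.mp hαBK
    rw [BK, Finset.mem_filter] at hαBK'
    obtain ⟨hαR, hαwall, hαnn⟩ := hαBK'
    obtain ⟨hkerA, hsdim⟩ := hαwall
    have hα0 : α ≠ 0 := hcr.nonzero α hαR
    have hαb : ∀ i, 0 ≤ α (B i) := by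
      have hsub : nonnegSpan ⇑B ⊆ {x' | 0 ≤ α x'} := by
        rw [← hclosK]
        exact closure_minimal hαnn
          (isClosed_le continuous_const α.continuous_of_finiteDimensional)
      exact fun i => hsub (basis_mem_nonnegSpan B i)
    set I₀ : Finset (Fin r) := Finset.univ.filter (fun i => α (B i) = 0) with hI₀
    have hIcard : I₀.card = r - 1 := by
      have h1 : ker0 α ∩ closure Kc = faceCone ⇑B I₀ := by
        rw [hclosK]
        exact inter_ker0_nonnegSpan B α hαb
      rw [h1, spanDim_faceCone B.linearIndependent] at hsdim
      exact hsdim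
    obtain ⟨i₀, hi₀⟩ : ∃ i₀, α (B i₀) ≠ 0 := by
      by_contra hall
      push_neg at hall
      exact hα0 (Module.Basis.ext B fun i => by rw [hall i]; rfl)
    have hi₀pos : 0 < α (B i₀) := lt_of_le_of_ne (hαb i₀) (Ne.symm hi₀)
    have huniq : ∀ i, i ≠ i₀ → α (B i) = 0 := by
      intro i₁ hi₁ne
      by_contra hi₁
      have h2r : 2 ≤ r := by
        have : 1 < Fintype.card (Fin r) := Fintype.one_lt_card_iff.mpr ⟨i₁, i₀, hi₁ne⟩
        rwa [Fintype.card_fin] at this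
      have hss : I₀ ⊆ (Finset.univ.erase i₀).erase i₁ := by
        intro i hi
        have hi' := (Finset.mem_filter.mp hi).2
        refine Finset.mem_erase.mpr ⟨?_, Finset.mem_erase.mpr ⟨?_, Finset.mem_univ i⟩⟩
        · rintro rfl; exact hi₁ hi'
        · rintro rfl; exact hi₀ hi'
      have hcard2 : ((Finset.univ.erase i₀).erase i₁).card = r - 2 := by
        rw [Finset.card_erase_of_mem (Finset.mem_erase.mpr ⟨hi₁ne, Finset.mem_univ i₁⟩),
          Finset.card_erase_of_mem (Finset.mem_univ i₀), Finset.card_univ, Fintype.card_fin]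
        omega
      have := Finset.card_le_card hss
      rw [hIcard, hcard2] at this
      omega
    by_cases hi₀J : i₀ ∈ J
    · -- α is the wall normal βW i₀
      have hprop : ∃ cc : ℝ, βW i₀ = cc • α := by
        refine ⟨βW i₀ (B i₀) / α (B i₀), Module.Basis.ext B fun j => ?_⟩
        rcases eq_or_ne j i₀ with rfl | hne
        · show βW j (B j) = (βW j (B j) / α (B j)) * α (B j)
          field_simp
        · rw [hβW0 i₀ j hne]
          show (0:ℝ) = (βW i₀ (B i₀) / α (B i₀)) * α (B j)
          rw [huniq j hne, mul_zero]
      rcases hcr.reduced α hαR (βW i₀) (hβWR i₀) hprop with heq | heq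
      · have hidx : ((e (e.symm ⟨i₀, hi₀J⟩) : {j // j ∈ J}) : Fin r) = i₀ := by
          rw [Equiv.apply_symm_apply]
        have hαlam : α ∘ₗ φ = lam (e.symm ⟨i₀, hi₀J⟩) := by
          show α ∘ₗ φ = βW ((e (e.symm ⟨i₀, hi₀J⟩) : {j // j ∈ J}) : Fin r) ∘ₗ φ
          rw [hidx, heq]
        rw [hαlam]
        exact Submodule.subset_span ⟨e.symm ⟨i₀, hi₀J⟩, rfl⟩
      · exfalso
        have := congrArg (fun f : Vr r →ₗ[ℝ] ℝ => f (B i₀)) heq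
        simp only [LinearMap.neg_apply] at this
        have hpos := hβWpos i₀
        rw [this] at hpos
        linarith
    · -- α restricts to zero
      have : α ∘ₗ φ = 0 := by
        apply LinearMap.ext
        intro u
        show α (φ u) = 0
        rw [heval α (φ u)]
        apply Finset.sum_eq_zero
        intro i _
        rcases eq_or_ne i i₀ with rfl | hne
        · rw [hrepr0 u i hi₀J, zero_mul]
        · rw [huniq i hne, mul_zero]
      rw [this]
      exact Submodule.zero_mem _

end StmtAux

namespace StmtAux

set_option maxHeartbeats 2000000 in
lemma exists_R' {r d : ℕ} (A : Finset (Set (Vr r))) (R : Finset (Vr r →ₗ[ℝ] ℝ))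
    (hcr : IsCrystArr A R)
    (φ : Vr d →ₗ[ℝ] Vr r) (hinj : Function.Injective φ)
    (S' : Finset (Vr r →ₗ[ℝ] ℝ)) (hS'R : ∀ α ∈ S', α ∈ R) (hS'ne : S'.Nonempty)
    (hran : Set.range φ = {x : Vr r | ∀ α ∈ S', α x = 0})
    (A' : Finset (Set (Vr d)))
    (hA'def : A' = (A.filter (fun H => ¬ {x : Vr r | ∀ α ∈ S', α x = 0} ⊆ H)).image
      (fun H => φ ⁻¹' H)) :
    ∃ R' : Finset (Vr d →ₗ[ℝ] ℝ), IsCrystArr A' R' := by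
  classical
  set ES : Set (Vr r) := {x : Vr r | ∀ α ∈ S', α x = 0} with hES
  have hker0comp : ∀ β : Vr r →ₗ[ℝ] ℝ, ker0 (β ∘ₗ φ) = φ ⁻¹' (ker0 β) := fun β => rfl
  have hcompzero : ∀ β : Vr r →ₗ[ℝ] ℝ, (β ∘ₗ φ = 0 ↔ ES ⊆ ker0 β) := by
    intro β
    constructor
    · intro h0 x hx
      rw [← hran] at hx
      obtain ⟨u, rfl⟩ := hx
      show β (φ u) = 0
      have := congrArg (fun f : Vr d →ₗ[ℝ] ℝ => f u) h0
      simpa using this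
    · intro hsub
      apply LinearMap.ext
      intro u
      have : φ u ∈ ES := by rw [← hran]; exact ⟨u, rfl⟩
      exact hsub this
  -- degenerate case d = 0
  rcases Nat.eq_zero_or_pos d with hd0 | hdpos
  · subst hd0
    have hA'empty : A' = ∅ := by
      rw [hA'def]
      rw [Finset.image_eq_empty, Finset.filter_eq_empty_iff]
      intro H hH
      intro hsub
      have hHA : H ∈ (A : Set (Set (Vr r))) := hH
      rw [hcr.hyps] at hHA
      obtain ⟨β, hβR, rfl⟩ := hHA
      have : β ∘ₗ φ ≠ 0 := fun h0 => hsub ((hcompzero β).mp h0)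
      exact this (zero_of_subsingleton _)
    subst hA'empty
    refine ⟨∅, ?_, by simp [ker0], by simp, by simp, by simp, by simp⟩
    · -- simplicial
      rintro K ⟨x₀, hx₀, rfl⟩
      refine ⟨fun i => 0, linearIndependent_empty_type, ?_⟩
      have h1 : ∀ u : Vr 0, u = ∑ i : Fin 0, (fun _ => (1:ℝ)) i • (0 : Vr 0) :=
        fun u => Subsingleton.elim _ _
      ext u
      constructor
      · intro _
        exact ⟨fun _ => 1, fun i => by norm_num, h1 u⟩
      · intro _
        have : u = x₀ := Subsingleton.elim _ _
        rw [this]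
        exact mem_connectedComponentIn hx₀
  -- main case d ≥ 1
  haveI : Nonempty (Fin d) := ⟨⟨0, hdpos⟩⟩
  set T' : Finset (Vr d →ₗ[ℝ] ℝ) :=
    (R.filter (fun β => ¬ ES ⊆ ker0 β)).image (fun β => β ∘ₗ φ) with hT'
  have hT'A' : (A' : Set (Set (Vr d))) = (fun f => ker0 f) '' (T' : Set _) := by
    rw [hA'def, hT']
    ext h
    simp only [Finset.coe_image, Finset.coe_filter, Set.mem_image, Set.mem_setOf_eq,
      Finset.mem_coe]
    constructor
    · rintro ⟨H, ⟨hHA, hHsub⟩, rfl⟩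
      have hHA' : H ∈ (A : Set (Set (Vr r))) := hHA
      rw [hcr.hyps] at hHA'
      obtain ⟨β, hβR, rfl⟩ := hHA'
      exact ⟨β ∘ₗ φ, ⟨β, ⟨hβR, hHsub⟩, rfl⟩, (hker0comp β).symm⟩
    · rintro ⟨f, ⟨β, ⟨hβR, hβsub⟩, rfl⟩, rfl⟩
      refine ⟨ker0 β, ⟨?_, hβsub⟩, (hker0comp β)⟩
      have : ker0 β ∈ (A : Set (Set (Vr r))) := by
        rw [hcr.hyps]; exact ⟨β, hβR, rfl⟩
      exact this
  have hT'ne : ∀ f ∈ T', f ≠ 0 := by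
    intro f hf
    rw [hT'] at hf
    obtain ⟨β, hβ, rfl⟩ := Finset.mem_image.mp hf
    obtain ⟨hβR, hβsub⟩ := Finset.mem_filter.mp hβ
    intro h0
    exact hβsub ((hcompzero β).mp h0)
  -- base point
  obtain ⟨x₀b, hx₀b⟩ := exists_forall_ne_zero T' hT'ne
  have hx₀bU : x₀b ∈ (⋃₀ (A' : Set (Set (Vr d))))ᶜ := by
    rw [compl_sUnion_eq hT'A']; exact hx₀b
  -- the class of a hyperplane of A'
  set C : Set (Vr d) → Set (Vr d →ₗ[ℝ] ℝ) :=
    fun h => {f | f ≠ 0 ∧ ∃ β ∈ R, f = β ∘ₗ φ ∧ ker0 f = h} with hC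
  have hdcard : Fintype.card (Fin d) = Module.finrank ℝ (Vr d) := by
    rw [Module.finrank_pi]
  -- existence of primitive generators
  have hγex : ∀ h ∈ A', ∃ γ : Vr d →ₗ[ℝ] ℝ, γ ≠ 0 ∧ ker0 γ = h ∧
      (∀ f ∈ C h, ∃ k : ℤ, f = (k : ℝ) • γ) ∧ γ ∈ Submodule.span ℤ (C h) := by
    intro h hh
    -- a representative
    rw [hA'def] at hh
    obtain ⟨H, hHfil, rfl⟩ := Finset.mem_image.mp hh
    obtain ⟨hHA, hHsub⟩ := Finset.mem_filter.mp hHfil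
    have hHA' : H ∈ (A : Set (Set (Vr r))) := hHA
    rw [hcr.hyps] at hHA'
    obtain ⟨β₀, hβ₀R, rfl⟩ := hHA'
    set δ : Vr d →ₗ[ℝ] ℝ := β₀ ∘ₗ φ with hδ
    have hδ0 : δ ≠ 0 := fun h0 => hHsub ((hcompzero β₀).mp h0)
    have hδker : ker0 δ = φ ⁻¹' (ker0 β₀) := hker0comp β₀
    have hδC : δ ∈ C (φ ⁻¹' (ker0 β₀)) := ⟨hδ0, β₀, hβ₀R, rfl, hδker⟩
    -- reference chamber data
    obtain ⟨v, lam, hvind, hccb, hlamR, hlam0, hlampos, hlint⟩ :=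
      master A R hcr φ hinj S' hS'R hS'ne hran A' hA'def x₀b hx₀bU
    set Bv : Module.Basis (Fin d) ℝ (Vr d) := basisOfLinearIndependentOfCardEqFinrank hvind hdcard
      with hBvdef
    have hBv : ⇑Bv = v := coe_basisOfLinearIndependentOfCardEqFinrank hvind hdcard
    -- find a coordinate where δ does not vanish
    have hi₁ : ∃ i₁, δ (v i₁) ≠ 0 := by
      by_contra hall
      push_neg at hall
      apply hδ0
      apply Module.Basis.ext Bv
      intro i
      rw [LinearMap.zero_apply]
      have : Bv i = v i := by rw [hBv]
      rw [this]
      exact hall i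
    obtain ⟨i₁, hi₁⟩ := hi₁
    set κ : (Vr d →ₗ[ℝ] ℝ) →ₗ[ℝ] ℝ :=
      (lam i₁ (v i₁))⁻¹ • ((LinearMap.applyₗ (v i₁)) : (Vr d →ₗ[ℝ] ℝ) →ₗ[ℝ] ℝ) with hκ
    have hκval : ∀ f : Vr d →ₗ[ℝ] ℝ, κ f = (lam i₁ (v i₁))⁻¹ * f (v i₁) := by
      intro f; rfl
    have hκlam : ∀ i, ∃ k : ℤ, κ (lam i) = (k : ℝ) := by
      intro i
      rcases eq_or_ne i i₁ with rfl | hne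
      · refine ⟨1, ?_⟩
        rw [hκval]
        rw [inv_mul_cancel₀ (hlampos i).ne']
        norm_num
      · refine ⟨0, ?_⟩
        rw [hκval, hlam0 i i₁ hne, mul_zero]
        norm_num
    have hκint : ∀ f ∈ Submodule.span ℤ (Set.range lam), ∃ k : ℤ, κ f = (k : ℝ) := by
      apply int_eval_of_mem_span
      rintro f ⟨i, rfl⟩
      exact hκlam i
    have hκδ : κ δ ≠ 0 := by
      rw [hκval]
      exact mul_ne_zero (inv_ne_zero (hlampos i₁).ne') hi₁
    have hCint : ∀ f ∈ C (φ ⁻¹' (ker0 β₀)), ∃ k : ℤ, κ f = (k : ℝ) := by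
      rintro f ⟨hf0, β, hβR, rfl, hfk⟩
      exact hκint _ (hlint β hβR)
    have hCprop : ∀ f ∈ C (φ ⁻¹' (ker0 β₀)), ∃ c : ℝ, f = c • δ := by
      rintro f ⟨hf0, β, hβR, heq, hfk⟩
      obtain ⟨c, hc0, hc⟩ := eq_smul_of_ker0_eq hδ0 hf0 (by rw [hfk, hδker])
      exact ⟨c, hc⟩
    obtain ⟨γ, hγ0, ⟨c, hc0, hγc⟩, hγmul, hγspan⟩ :=
      exists_gamma (C (φ ⁻¹' (ker0 β₀))) δ hδC hδ0 κ hκδ hCint hCprop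
    refine ⟨γ, hγ0, ?_, hγmul, hγspan⟩
    rw [hγc, ker0_smul hc0, hδker]
  -- the choice function
  set γfun : Set (Vr d) → (Vr d →ₗ[ℝ] ℝ) :=
    fun h => if hh : h ∈ A' then Classical.choose (hγex h hh) else 0 with hγfun
  have hγprop : ∀ h ∈ A', γfun h ≠ 0 ∧ ker0 (γfun h) = h ∧
      (∀ f ∈ C h, ∃ k : ℤ, f = (k : ℝ) • γfun h) ∧
      γfun h ∈ Submodule.span ℤ (C h) := by
    intro h hh
    have hγeq : γfun h = Classical.choose (hγex h hh) := by
      simp only [hγfun]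
      rw [dif_pos hh]
    rw [hγeq]
    exact Classical.choose_spec (hγex h hh)
  set R' : Finset (Vr d →ₗ[ℝ] ℝ) :=
    A'.image γfun ∪ A'.image (fun h => -γfun h) with hR'
  have hR'mem : ∀ f, f ∈ R' ↔ ∃ h ∈ A', f = γfun h ∨ f = -γfun h := by
    intro f
    rw [hR', Finset.mem_union, Finset.mem_image, Finset.mem_image]
    constructor
    · rintro (⟨h, hh, rfl⟩ | ⟨h, hh, rfl⟩)
      · exact ⟨h, hh, Or.inl rfl⟩
      · exact ⟨h, hh, Or.inr rfl⟩
    · rintro ⟨h, hh, rfl | rfl⟩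
      · exact Or.inl ⟨h, hh, rfl⟩
      · exact Or.inr ⟨h, hh, rfl⟩
  refine ⟨R', ?_, ?_, ?_, ?_, ?_, ?_⟩
  · -- simplicial
    rintro K ⟨x₀, hx₀, rfl⟩
    obtain ⟨v, lam, hvind, hcc, _, _, _, _⟩ :=
      master A R hcr φ hinj S' hS'R hS'ne hran A' hA'def x₀ hx₀
    exact ⟨v, hvind, hcc⟩
  · -- hyps
    ext h
    simp only [Set.mem_image, Finset.mem_coe]
    constructor
    · intro hh
      exact ⟨γfun h, (hR'mem _).mpr ⟨h, hh, Or.inl rfl⟩, (hγprop h hh).2.1⟩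
    · rintro ⟨f, hf, rfl⟩
      rw [hR'mem] at hf
      obtain ⟨h', hh', rfl | rfl⟩ := hf
      · rw [(hγprop h' hh').2.1]; exact hh'
      · rw [ker0_neg, (hγprop h' hh').2.1]; exact hh'
  · -- nonzero
    intro f hf
    rw [hR'mem] at hf
    obtain ⟨h', hh', rfl | rfl⟩ := hf
    · exact (hγprop h' hh').1
    · simp only [ne_eq, neg_eq_zero]
      exact (hγprop h' hh').1
  · -- neg_mem
    intro f hf
    rw [hR'mem] at hf
    obtain ⟨h', hh', rfl | rfl⟩ := hf
    · rw [hR'mem]; exact ⟨h', hh', Or.inr rfl⟩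
    · rw [hR'mem]; rw [neg_neg]; exact ⟨h', hh', Or.inl rfl⟩
  · -- reduced
    intro α' hα' β' hβ' ⟨c, hc⟩
    have hα'R := hα'; rw [hR'mem] at hα'R
    have hβ'R := hβ'; rw [hR'mem] at hβ'R
    obtain ⟨h₁, hh₁, hα'eq⟩ := hα'R
    obtain ⟨h₂, hh₂, hβ'eq⟩ := hβ'R
    have hα0 : α' ≠ 0 := by
      rcases hα'eq with rfl | rfl
      · exact (hγprop h₁ hh₁).1
      · simp only [ne_eq, neg_eq_zero]; exact (hγprop h₁ hh₁).1
    have hβ0 : β' ≠ 0 := by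
      rcases hβ'eq with rfl | rfl
      · exact (hγprop h₂ hh₂).1
      · simp only [ne_eq, neg_eq_zero]; exact (hγprop h₂ hh₂).1
    have hc0 : c ≠ 0 := by
      rintro rfl
      rw [zero_smul] at hc
      exact hβ0 hc
    have hkereq : h₂ = h₁ := by
      have h1 : ker0 α' = h₁ := by
        rcases hα'eq with rfl | rfl
        · exact (hγprop h₁ hh₁).2.1
        · rw [ker0_neg]; exact (hγprop h₁ hh₁).2.1
      have h2 : ker0 β' = h₂ := by
        rcases hβ'eq with rfl | rfl
        · exact (hγprop h₂ hh₂).2.1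
        · rw [ker0_neg]; exact (hγprop h₂ hh₂).2.1
      rw [← h2, hc, ker0_smul hc0, h1]
    subst hkereq
    rcases hα'eq with rfl | rfl <;> rcases hβ'eq with h | h
    · exact Or.inl h
    · exact Or.inr (by rw [h])
    · exact Or.inr (by rw [h, neg_neg])
    · exact Or.inl h
  · -- integral
    rintro K ⟨x₀, hx₀, rfl⟩ β' hβ'
    obtain ⟨v, lam, hvind, hcc, hlamR, hlam0, hlampos, hlint⟩ :=
      master A R hcr φ hinj S' hS'R hS'ne hran A' hA'def x₀ hx₀
    set Bv : Module.Basis (Fin d) ℝ (Vr d) := basisOfLinearIndependentOfCardEqFinrank hvind hdcard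
      with hBvdef
    have hBv : ⇑Bv = v := coe_basisOfLinearIndependentOfCardEqFinrank hvind hdcard
    set K' : Set (Vr d) := connectedComponentIn (⋃₀ (A' : Set (Set (Vr d))))ᶜ x₀ with hK'
    have hK'v : K' = posSpan v := hcc
    have hclosK' : closure K' = nonnegSpan v := by
      rw [hK'v, ← hBv, closure_posSpan]
    -- for each i, a sign-adjusted primitive generator is in BK
    have hstep : ∀ i : Fin d, lam i ∈
        (Submodule.span ℤ ((BK A' R' K' : Set (Vr d →ₗ[ℝ] ℝ)))) := by
      intro i
      obtain ⟨βi, hβiR, hβieq⟩ := hlamR i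
      have hlami0 : lam i ≠ 0 := by
        intro h0
        have := hlampos i
        rw [h0] at this
        simp at this
      set hi : Set (Vr d) := ker0 (lam i) with hhi
      have hhiA' : hi ∈ A' := by
        have h1 : hi = φ ⁻¹' (ker0 βi) := by rw [hhi, hβieq, hker0comp]
        rw [hA'def, h1]
        apply Finset.mem_image_of_mem
        rw [Finset.mem_filter]
        constructor
        · have : ker0 βi ∈ (A : Set (Set (Vr r))) := by
            rw [hcr.hyps]; exact ⟨βi, hβiR, rfl⟩
          exact this
        · intro hsub
          exact hlami0 (by rw [hβieq]; exact (hcompzero βi).mpr hsub)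
      have hlamC : lam i ∈ C hi := ⟨hlami0, βi, hβiR, hβieq, rfl⟩
      obtain ⟨ki, hki⟩ := (hγprop hi hhiA').2.2.1 _ hlamC
      have hki0 : ki ≠ 0 := by
        rintro rfl
        rw [Int.cast_zero, zero_smul] at hki
        exact hlami0 hki
      set gi : Vr d →ₗ[ℝ] ℝ := if 0 < ki then γfun hi else -γfun hi with hgi
      have hgiR' : gi ∈ R' := by
        rw [hR'mem, hgi]
        split
        · exact ⟨hi, hhiA', Or.inl rfl⟩
        · exact ⟨hi, hhiA', Or.inr rfl⟩
      have hgiker : ker0 gi = hi := by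
        rw [hgi]
        split
        · exact (hγprop hi hhiA').2.1
        · rw [ker0_neg]; exact (hγprop hi hhiA').2.1
      -- positivity of lam i on K'
      have hlamK' : ∀ u ∈ K', 0 < lam i u := by
        intro u hu
        rw [hK'v] at hu
        obtain ⟨c, hcpos, rfl⟩ := hu
        have : lam i (∑ j, c j • v j) = c i * lam i (v i) := by
          rw [map_sum, Finset.sum_eq_single i]
          · rw [map_smul]; rfl
          · intro j _ hj
            rw [map_smul, hlam0 i j (Ne.symm hj)]
            simp
          · intro hmem; exact absurd (Finset.mem_univ i) hmem
        rw [this]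
        exact mul_pos (hcpos i) (hlampos i)
      have hginn : K' ⊆ {u | 0 ≤ gi u} := by
        intro u hu
        have h1 : lam i u = (ki : ℝ) * γfun hi u := by
          rw [hki]; rfl
        have h2 := hlamK' u hu
        rw [h1] at h2
        rw [hgi]
        split
        · rename_i hkipos
          show 0 ≤ γfun hi u
          have : (0:ℝ) < ki := by exact_mod_cast hkipos
          nlinarith
        · rename_i hkineg
          show 0 ≤ - γfun hi u
          have hkile : ki < 0 := by
            rcases lt_trichotomy ki 0 with h | h | h
            · exact h
            · exact absurd h hki0
            · exact absurd h hkineg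
          have : (ki : ℝ) < 0 := by exact_mod_cast hkile
          nlinarith
      -- walls
      have hlamBv : ∀ j, 0 ≤ lam i (Bv j) := by
        intro j
        rw [hBv]
        rcases eq_or_ne i j with rfl | hne
        · exact (hlampos i).le
        · rw [hlam0 i j hne]
      have hfilter : Finset.univ.filter (fun j => lam i (Bv j) = 0) = Finset.univ.erase i := by
        ext j
        rw [Finset.mem_filter, Finset.mem_erase]
        constructor
        · rintro ⟨_, hj0⟩
          refine ⟨?_, Finset.mem_univ j⟩
          rintro rfl
          rw [hBv] at hj0
          exact (hlampos _).ne' hj0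
        · rintro ⟨hne, _⟩
          refine ⟨Finset.mem_univ j, ?_⟩
          rw [hBv]
          exact hlam0 i j (Ne.symm hne)
      have hwall : spanDim (hi ∩ closure K') = d - 1 := by
        rw [hclosK', hhi]
        have : ker0 (lam i) ∩ nonnegSpan v = faceCone ⇑Bv (Finset.univ.erase i) := by
          rw [← hBv, ← hfilter]
          exact inter_ker0_nonnegSpan Bv (lam i) hlamBv
        rw [this, spanDim_faceCone Bv.linearIndependent,
          Finset.card_erase_of_mem (Finset.mem_univ i), Finset.card_univ, Fintype.card_fin]
      have hgiBK : gi ∈ BK A' R' K' := by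
        rw [BK, Finset.mem_filter]
        refine ⟨hgiR', ⟨?_, ?_⟩, ?_⟩
        · rw [hgiker]; exact hhiA'
        · rw [hgiker]; exact hwall
        · exact hginn
      have hγiBK : γfun hi ∈ Submodule.span ℤ ((BK A' R' K' : Set (Vr d →ₗ[ℝ] ℝ))) := by
        rw [hgi] at hgiBK
        by_cases hkipos : 0 < ki
        · rw [if_pos hkipos] at hgiBK
          exact Submodule.subset_span hgiBK
        · rw [if_neg hkipos] at hgiBK
          have := Submodule.neg_mem _ (Submodule.subset_span
            (Finset.mem_coe.mpr hgiBK) :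
            -γfun hi ∈ Submodule.span ℤ ((BK A' R' K' : Set (Vr d →ₗ[ℝ] ℝ))))
          rwa [neg_neg] at this
      rw [hki]
      have : ((ki : ℝ)) • γfun hi = ki • γfun hi := Int.cast_smul_eq_zsmul ℝ ki (γfun hi)
      rw [this]
      exact Submodule.smul_mem _ _ hγiBK
    -- every restricted root is in the BK-span
    have hrangelam : Submodule.span ℤ (Set.range lam) ≤
        Submodule.span ℤ ((BK A' R' K' : Set (Vr d →ₗ[ℝ] ℝ))) := by
      rw [Submodule.span_le]
      rintro _ ⟨i, rfl⟩
      exact hstep i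
    have hCspan : ∀ h ∈ A', γfun h ∈
        Submodule.span ℤ ((BK A' R' K' : Set (Vr d →ₗ[ℝ] ℝ))) := by
      intro h hh
      have h1 := (hγprop h hh).2.2.2
      have h2 : Submodule.span ℤ (C h) ≤
          Submodule.span ℤ ((BK A' R' K' : Set (Vr d →ₗ[ℝ] ℝ))) := by
        rw [Submodule.span_le]
        rintro f ⟨hf0, β, hβR, rfl, hfk⟩
        exact hrangelam (hlint β hβR)
      exact h2 h1
    rw [hR'mem] at hβ'
    obtain ⟨h', hh', rfl | rfl⟩ := hβ'
    · exact hCspan h' hh'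
    · exact Submodule.neg_mem _ (hCspan h' hh')

end StmtAux


end

open StmtAux in
set_option maxHeartbeats 1000000 in
/-- the restriction of a crystallographic arrangement to an
intersection `E` of its hyperplanes is again a crystallographic arrangement
(identifying `E` with `ℝ^d` via an injective linear map with range `E`). -/
theorem stmt13 {r : ℕ} (A : Finset (Set (Vr r))) (R : Finset (Vr r →ₗ[ℝ] ℝ))
    (hcr : IsCrystArr A R) (S : Finset (Set (Vr r))) (hS : S ⊆ A) (hSne : S.Nonempty) :
    ∃ (d : ℕ) (φ : Vr d →ₗ[ℝ] Vr r) (A' : Finset (Set (Vr d)))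
      (R' : Finset (Vr d →ₗ[ℝ] ℝ)),
      Function.Injective φ ∧ Set.range φ = ⋂₀ (S : Set (Set (Vr r))) ∧
      (A' : Set (Set (Vr d))) =
        { h | ∃ H ∈ A, ¬ (⋂₀ (S : Set (Set (Vr r))) ⊆ H) ∧ h = φ ⁻¹' H } ∧
      IsCrystArr A' R' := by
  classical
  set S' : Finset (Vr r →ₗ[ℝ] ℝ) := R.filter (fun α => ker0 α ∈ S) with hS'def
  have hS'R : ∀ α ∈ S', α ∈ R := fun α hα => (Finset.mem_filter.mp hα).1
  have hSeq : ⋂₀ (S : Set (Set (Vr r))) = {x : Vr r | ∀ α ∈ S', α x = 0} := by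
    ext x
    constructor
    · intro hx α hα
      obtain ⟨hαR, hαS⟩ := Finset.mem_filter.mp hα
      exact hx (ker0 α) hαS
    · intro hx H hH
      have hHS : H ∈ S := Finset.mem_coe.mp hH
      have hHA : H ∈ (A : Set (Set (Vr r))) := Finset.mem_coe.mpr (hS hHS)
      rw [hcr.hyps] at hHA
      obtain ⟨β, hβR, rfl⟩ := hHA
      exact hx β (Finset.mem_filter.mpr ⟨hβR, hHS⟩)
  have hS'ne : S'.Nonempty := by
    obtain ⟨H, hH⟩ := hSne
    have hHA : H ∈ (A : Set (Set (Vr r))) := Finset.mem_coe.mpr (hS hH)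
    rw [hcr.hyps] at hHA
    obtain ⟨β, hβR, rfl⟩ := hHA
    exact ⟨β, Finset.mem_filter.mpr ⟨hβR, hH⟩⟩
  set Esub : Submodule ℝ (Vr r) := ⨅ α ∈ S', LinearMap.ker α with hEsubdef
  have hEsub : ∀ x : Vr r, x ∈ Esub ↔ ∀ α ∈ S', α x = 0 := by
    intro x
    simp [hEsubdef, Submodule.mem_iInf, LinearMap.mem_ker]
  set d := Module.finrank ℝ ↥Esub with hd
  set bE : Module.Basis (Fin d) ℝ ↥Esub := Module.finBasis ℝ ↥Esub with hbE
  set φ : Vr d →ₗ[ℝ] Vr r := Esub.subtype ∘ₗ (bE.equivFun.symm.toLinearMap) with hφ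
  have hφval : ∀ u : Vr d, φ u = ((bE.equivFun.symm u : ↥Esub) : Vr r) := fun u => rfl
  have hφinj : Function.Injective φ := by
    intro a b hab
    rw [hφval, hφval] at hab
    exact bE.equivFun.symm.injective (Subtype.ext hab)
  have hφran : Set.range ⇑φ = {x : Vr r | ∀ α ∈ S', α x = 0} := by
    ext xx
    constructor
    · rintro ⟨u, rfl⟩
      rw [hφval]
      exact (hEsub _).mp (bE.equivFun.symm u).2
    · intro hxx
      refine ⟨bE.equivFun ⟨xx, (hEsub xx).mpr hxx⟩, ?_⟩
      rw [hφval, LinearEquiv.symm_apply_apply]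
  set A' : Finset (Set (Vr d)) :=
    (A.filter (fun H => ¬ {x : Vr r | ∀ α ∈ S', α x = 0} ⊆ H)).image (fun H => φ ⁻¹' H)
    with hA'def
  obtain ⟨R', hR'⟩ := exists_R' A R hcr φ hφinj S' hS'R hS'ne hφran A' hA'def
  refine ⟨d, φ, A', R', hφinj, ?_, ?_, hR'⟩
  · rw [hSeq]; exact hφran
  · rw [hSeq, hA'def]
    ext h
    simp only [Finset.coe_image, Finset.coe_filter, Set.mem_image, Set.mem_setOf_eq]
    constructor
    · rintro ⟨H, ⟨hHA, hHsub⟩, rfl⟩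
      exact ⟨H, hHA, hHsub, rfl⟩
    · rintro ⟨H, hHA, hHsub, rfl⟩
      exact ⟨H, ⟨hHA, hHsub⟩, rfl⟩
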